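/- arXiv:2306.09832 — 3 statements merged into one kernel-verified Lean document; each statement's English description precedes it below -/
import Mathlib

section
/- Let R be a ring. The supremum of projective dimensions of all R-modules equals the supremum of injective dimensions of all R-modules (as elements of ℕ ∪ {∞}). -/
universe u

open CategoryTheory

variable (R : Type u) [Ring R]

/-- Resolutions `0 → P_n → ⋯ → P_0 → M → 0` of length `≤ n` by modules satisfying `pred`. -/
def ResBy (pred : ∀ (M : Type u) [AddCommGroup M] [Module R M], Prop) :
    ℕ → ∀ (M : Type u) [AddCommGroup M] [Module R M], Prop
  | 0, M, _, _ => pred M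
  | (n+1), M, _, _ => ∃ (P : Type u) (_ : AddCommGroup P) (_ : Module R P)
      (f : P →ₗ[R] M), pred P ∧ Function.Surjective f ∧
        ResBy pred n (LinearMap.ker f)

/-- `M` admits an exact sequence `0 → P_n → ⋯ → P_0 → M → 0`
with all `P_i` finitely generated projective, i.e. `M ∈ 𝒫^{<n+1}`. -/
def FPRes (n : ℕ) (M : Type u) [AddCommGroup M] [Module R M] : Prop :=
  ResBy R (fun P _ _ => Module.Finite R P ∧ Module.Projective R P) n M

/-- `M` has projective dimension at most `n`. -/
def pdLE (n : ℕ) (M : Type u) [AddCommGroup M] [Module R M] : Prop :=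
  ResBy R (fun P _ _ => Module.Projective R P) n M

/-- Coresolutions `0 → M → I^0 → ⋯ → I^n → 0` of length `≤ n` by modules satisfying `pred`. -/
def CoresBy (pred : ∀ (M : Type u) [AddCommGroup M] [Module R M], Prop) :
    ℕ → ∀ (M : Type u) [AddCommGroup M] [Module R M], Prop
  | 0, M, _, _ => pred M
  | (n+1), M, _, _ => ∃ (I : Type u) (_ : AddCommGroup I) (_ : Module R I)
      (f : M →ₗ[R] I), pred I ∧ Function.Injective f ∧
        CoresBy pred n (I ⧸ LinearMap.range f)

/-- `M` has injective dimension at most `n`. -/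
def idLE (n : ℕ) (M : Type u) [AddCommGroup M] [Module R M] : Prop :=
  CoresBy R (fun I _ _ => Module.Injective R I) n M

/-- The projective dimension of `M`, as an element of `ℕ∞`. -/
noncomputable def pdim (M : Type u) [AddCommGroup M] [Module R M] : ℕ∞ :=
  sInf ((↑) '' {n : ℕ | pdLE R n M})

/-- The injective dimension of `M`, as an element of `ℕ∞`. -/
noncomputable def idim (M : Type u) [AddCommGroup M] [Module R M] : ℕ∞ :=
  sInf ((↑) '' {n : ℕ | idLE R n M})

/-- A short exact sequence `0 → A → B → C → 0` (given by `f`, `g`) is `n`-exact if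
`Hom_R(M, -)` keeps it exact for every `M ∈ 𝒫^{<n+1}`. -/
def NExactSES (n : ℕ) {A B C : Type u} [AddCommGroup A] [Module R A]
    [AddCommGroup B] [Module R B] [AddCommGroup C] [Module R C]
    (f : A →ₗ[R] B) (g : B →ₗ[R] C) : Prop :=
  ∀ (M : Type u) [AddCommGroup M] [Module R M], FPRes R n M →
    Function.Injective (fun h : M →ₗ[R] A => f.comp h) ∧
    Function.Exact (fun h : M →ₗ[R] A => f.comp h) (fun h : M →ₗ[R] B => g.comp h) ∧
    Function.Surjective (fun h : M →ₗ[R] B => g.comp h)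

/-- `Q` is `n`-projective if `Hom_R(Q, -)` keeps every `n`-exact short exact sequence exact. -/
def NProj (n : ℕ) (Q : Type u) [AddCommGroup Q] [Module R Q] : Prop :=
  ∀ (A B C : Type u) [AddCommGroup A] [Module R A] [AddCommGroup B] [Module R B]
    [AddCommGroup C] [Module R C] (f : A →ₗ[R] B) (g : B →ₗ[R] C),
    Function.Injective f → Function.Surjective g → Function.Exact f g →
    NExactSES R n f g →
    Function.Injective (fun h : Q →ₗ[R] A => f.comp h) ∧
    Function.Exact (fun h : Q →ₗ[R] A => f.comp h) (fun h : Q →ₗ[R] B => g.comp h) ∧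
    Function.Surjective (fun h : Q →ₗ[R] B => g.comp h)

/-- `Ext^k_R(M, N)` as an abelian group (computed in `ModuleCat R`). -/
noncomputable def ExtGrp (k : ℕ) (M N : Type u) [AddCommGroup M] [Module R M]
    [AddCommGroup N] [Module R N] : Type u :=
  ((Ext ℤ (ModuleCat.{u} R) k).obj (Opposite.op (ModuleCat.of R M))).obj (ModuleCat.of R N)


namespace GlobalDimAux

open Function LinearMap

variable {R}
variable {A B C M N P Q I X Y K P' I' M' N' : Type u}

theorem factorThroughSurj [AddCommGroup P] [Module R P] [AddCommGroup M] [Module R M]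
    [AddCommGroup X] [Module R X] (p : P →ₗ[R] M) (hp : Function.Surjective p)
    (φ : P →ₗ[R] X) (h : ∀ y, p y = 0 → φ y = 0) :
    ∃ ψ : M →ₗ[R] X, ψ ∘ₗ p = φ := by
  have h' : LinearMap.ker p ≤ LinearMap.ker φ := fun y hy => h y hy
  let e := p.quotKerEquivOfSurjective hp
  have he : ∀ y : P, e (Submodule.Quotient.mk y) = p y := fun y => rfl
  refine ⟨((LinearMap.ker p).liftQ φ h') ∘ₗ (e.symm : M →ₗ[R] (P ⧸ LinearMap.ker p)), ?_⟩
  ext y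
  have : e.symm (p y) = Submodule.Quotient.mk y := by
    apply e.injective; rw [LinearEquiv.apply_symm_apply, he]
  simp [this]

theorem sectionOfRetraction [AddCommGroup A] [Module R A] [AddCommGroup X] [Module R X]
    [AddCommGroup C] [Module R C] (a : A →ₗ[R] X) (b : X →ₗ[R] C)
    (hb : Function.Surjective b) (hex : Function.Exact a b)
    (r : X →ₗ[R] A) (hr : r ∘ₗ a = LinearMap.id) :
    ∃ s : C →ₗ[R] X, b ∘ₗ s = LinearMap.id := by
  have hker : ∀ x : X, b x = 0 → ((LinearMap.id : X →ₗ[R] X) - a ∘ₗ r) x = 0 := by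
    intro x hx
    obtain ⟨t, rfl⟩ := (hex x).mp hx
    have ht : r (a t) = t := congrArg (fun f => f t) (congrArg DFunLike.coe hr)
    simp [ht]
  obtain ⟨s, hs⟩ := factorThroughSurj b hb ((LinearMap.id : X →ₗ[R] X) - a ∘ₗ r) hker
  refine ⟨s, ?_⟩
  have hcomp : (b ∘ₗ s) ∘ₗ b = LinearMap.id ∘ₗ b := by
    rw [LinearMap.comp_assoc, hs]
    ext x
    simp [hex.apply_apply_eq_zero]
  exact (LinearMap.cancel_right hb).mp hcomp

/-- `ExtVanish M N` says that every short exact sequence `0 → N → X → M → 0` splits,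
i.e. `Ext¹(M, N) = 0`. -/
def ExtVanish (M N : Type u) [AddCommGroup M] [Module R M] [AddCommGroup N] [Module R N] :
    Prop :=
  ∀ (X : Type u) [AddCommGroup X] [Module R X], ∀ (i : N →ₗ[R] X) (p : X →ₗ[R] M),
    Function.Injective i → Function.Surjective p → Function.Exact i p →
      ∃ s : M →ₗ[R] X, p ∘ₗ s = LinearMap.id

theorem extVanish_of_projective [AddCommGroup M] [Module R M] [AddCommGroup N] [Module R N]
    (hM : Module.Projective R M) : ExtVanish (R := R) M N := by
  intro X _ _ i p _ hp _
  exact Module.projective_lifting_property p LinearMap.id hp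

theorem extVanish_of_injective [AddCommGroup M] [Module R M] [AddCommGroup N] [Module R N]
    (hN : Module.Injective R N) : ExtVanish (R := R) M N := by
  intro X _ _ i p hi hp hex
  obtain ⟨r, hr⟩ := hN.out i hi LinearMap.id
  exact sectionOfRetraction i p hp hex r (LinearMap.ext hr)

theorem extVanish_iso_left [AddCommGroup M] [Module R M] [AddCommGroup N] [Module R N]
    {M' : Type u} [AddCommGroup M'] [Module R M'] (e : M ≃ₗ[R] M')
    (h : ExtVanish (R := R) M N) : ExtVanish (R := R) M' N := by
  intro X _ _ i p hi hp hex
  have hex' : Function.Exact i ((e.symm : M' →ₗ[R] M) ∘ₗ p) := by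
    intro x
    constructor
    · intro hx
      exact (hex x).mp (by simpa using congrArg e hx)
    · intro hx
      simp [(hex x).mpr hx]
  obtain ⟨s, hs⟩ := h X i ((e.symm : M' →ₗ[R] M) ∘ₗ p) hi
    (fun m => (hp (e m)).imp (fun x hx => by simp [hx])) hex'
  refine ⟨s ∘ₗ (e.symm : M' →ₗ[R] M), ?_⟩
  ext m
  have := congrArg (fun f => e (f (e.symm m))) (congrArg DFunLike.coe hs)
  simpa using this

theorem extVanish_iso_right [AddCommGroup M] [Module R M] [AddCommGroup N] [Module R N]
    {N' : Type u} [AddCommGroup N'] [Module R N'] (e : N ≃ₗ[R] N')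
    (h : ExtVanish (R := R) M N) : ExtVanish (R := R) M N' := by
  intro X _ _ i p hi hp hex
  have hex' : Function.Exact (i ∘ₗ (e : N →ₗ[R] N')) p := by
    intro x
    rw [hex x]
    constructor
    · rintro ⟨n, rfl⟩; exact ⟨e.symm n, by simp⟩
    · rintro ⟨n, rfl⟩; exact ⟨e n, by simp⟩
  exact h X (i ∘ₗ (e : N →ₗ[R] N')) p (hi.comp e.injective) hp hex'


theorem injective_of_retraction [AddCommGroup N] [Module R N] [AddCommGroup I] [Module R I]
    (j : N →ₗ[R] I) (r : I →ₗ[R] N) (h : r ∘ₗ j = LinearMap.id)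
    (hI : Module.Injective R I) : Module.Injective R N where
  out X Y _ _ _ _ f hf g := by
    obtain ⟨h', hh'⟩ := hI.out f hf (j ∘ₗ g)
    refine ⟨r ∘ₗ h', fun x => ?_⟩
    have h2 : r (j (g x)) = g x := by
      have := LinearMap.ext_iff.mp h (g x); simpa using this
    have h3 : h' (f x) = j (g x) := by simpa using hh' x
    simp [h3, h2]

theorem injective_prod [AddCommGroup A] [Module R A] [AddCommGroup B] [Module R B]
    (hA : Module.Injective R A) (hB : Module.Injective R B) :
    Module.Injective R (A × B) where
  out X Y _ _ _ _ f hf g := by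
    obtain ⟨h₁, hh₁⟩ := hA.out f hf ((LinearMap.fst R A B) ∘ₗ g)
    obtain ⟨h₂, hh₂⟩ := hB.out f hf ((LinearMap.snd R A B) ∘ₗ g)
    refine ⟨h₁.prod h₂, fun x => ?_⟩
    exact Prod.ext (by simpa using hh₁ x) (by simpa using hh₂ x)

theorem injective_of_subsingleton [AddCommGroup N] [Module R N] [Subsingleton N] :
    Module.Injective R N where
  out X Y _ _ _ _ f hf g := ⟨0, fun x => Subsingleton.elim _ _⟩

theorem projective_of_subsingleton [AddCommGroup P] [Module R P] [Subsingleton P] :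
    Module.Projective R P := by
  refine Module.projective_def'.mpr ⟨0, ?_⟩
  ext x
  exact Subsingleton.elim _ _

section ProdLemmas

variable [AddCommGroup A] [Module R A] [AddCommGroup Q] [Module R Q]
  [AddCommGroup N] [Module R N] [AddCommGroup M] [Module R M]
  [AddCommGroup I] [Module R I]

theorem extVanish_prod_left (hA : ExtVanish (R := R) A N) (hQ : Module.Projective R Q) :
    ExtVanish (R := R) (A × Q) N := by
  intro X _ _ i p hi hp hex
  set pA2 : X →ₗ[R] Q := (LinearMap.snd R A Q) ∘ₗ p with hpA2
  set XA : Submodule R X := LinearMap.ker pA2 with hXA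
  have hiA : ∀ n, i n ∈ XA := fun n => by
    have : p (i n) = 0 := hex.apply_apply_eq_zero n
    simp [hXA, hpA2, LinearMap.mem_ker, this]
  set i' : N →ₗ[R] XA := LinearMap.codRestrict XA i hiA with hi'
  set pA : XA →ₗ[R] A := (LinearMap.fst R A Q) ∘ₗ p ∘ₗ XA.subtype with hpA
  have hpAsurj : Function.Surjective pA := by
    intro a
    obtain ⟨x, hx⟩ := hp (a, 0)
    have hxm : x ∈ XA := by simp [hXA, hpA2, LinearMap.mem_ker, hx]
    exact ⟨⟨x, hxm⟩, by simp [hpA, hx]⟩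
  have hi'inj : Function.Injective i' := by
    intro n m hnm
    exact hi (congrArg Subtype.val hnm)
  have hex' : Function.Exact i' pA := by
    intro z
    constructor
    · intro hz
      have hz2 : pA2 z.1 = 0 := z.2
      have hpz : p z.1 = 0 := by
        have h1 : (p z.1).1 = 0 := hz
        have h2 : (p z.1).2 = 0 := hz2
        exact Prod.ext h1 h2
      obtain ⟨n, hn⟩ := (hex z.1).mp hpz
      exact ⟨n, Subtype.ext hn⟩
    · rintro ⟨n, rfl⟩
      have : p (i n) = 0 := hex.apply_apply_eq_zero n
      simp [hpA, hi', this]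
  obtain ⟨sA, hsA⟩ := hA XA i' pA hi'inj hpAsurj hex'
  letI := hQ
  obtain ⟨hQl, hhQl⟩ := Module.projective_lifting_property p (LinearMap.inr R A Q) hp
  refine ⟨(XA.subtype ∘ₗ sA ∘ₗ LinearMap.fst R A Q) + (hQl ∘ₗ LinearMap.snd R A Q), ?_⟩
  refine LinearMap.ext fun aq => ?_
  rcases aq with ⟨a, q⟩
  · have h1 : p ((sA a : XA) : X) = (a, 0) := by
      refine Prod.ext ?_ ?_
      · exact congrArg (fun z => z) (LinearMap.ext_iff.mp hsA a)
      · exact (sA a).2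
    have h2 : p (hQl q) = (0, q) := LinearMap.ext_iff.mp hhQl q
    simp [h1, h2]

theorem extVanish_prod_left' (h : ExtVanish (R := R) (A × Q) N) :
    ExtVanish (R := R) A N := by
  intro X _ _ i p hi hp hex
  set i' : N →ₗ[R] X × Q := (LinearMap.inl R X Q) ∘ₗ i with hi'd
  set p' : X × Q →ₗ[R] A × Q := p.prodMap LinearMap.id with hp'd
  have hex' : Function.Exact i' p' := by
    intro z
    constructor
    · intro hz
      have h1 : p z.1 = 0 := congrArg Prod.fst hz
      have h2 : z.2 = 0 := congrArg Prod.snd hz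
      obtain ⟨n, hn⟩ := (hex z.1).mp h1
      refine ⟨n, ?_⟩
      have : i' n = (z.1, z.2) := Prod.ext (by simpa [hi'd] using hn) (by simp [hi'd, h2])
      simpa using this
    · rintro ⟨n, hn⟩
      rw [← hn]
      have : p (i n) = 0 := hex.apply_apply_eq_zero n
      simp [hi'd, hp'd, this]
  obtain ⟨s', hs'⟩ := h (X × Q) i' p'
    (fun n m hnm => hi (congrArg Prod.fst hnm))
    (fun ⟨a, q⟩ => by
      obtain ⟨x, hx⟩ := hp a
      exact ⟨(x, q), by simp [hp'd, hx]⟩)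
    hex'
  refine ⟨(LinearMap.fst R X Q) ∘ₗ s' ∘ₗ LinearMap.inl R A Q, ?_⟩
  ext a
  have := congrArg Prod.fst (LinearMap.ext_iff.mp hs' (a, 0))
  simpa [hp'd] using this

theorem extVanish_prod_right (hA : ExtVanish (R := R) M A) (hI : Module.Injective R I) :
    ExtVanish (R := R) M (A × I) := by
  intro X _ _ j p hj hp hex
  set S : Submodule R X := LinearMap.range (j ∘ₗ LinearMap.inr R A I) with hS
  have hpS : ∀ x ∈ S, p x = 0 := by
    rintro x ⟨t, rfl⟩
    exact hex.apply_apply_eq_zero _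
  set π : X →ₗ[R] X ⧸ S := S.mkQ with hπ
  set jA : A →ₗ[R] X ⧸ S := π ∘ₗ j ∘ₗ LinearMap.inl R A I with hjA
  have hjAinj : Function.Injective jA := by
    rw [injective_iff_map_eq_zero]
    intro a ha
    have : j (a, 0) ∈ S := by
      have := (Submodule.Quotient.mk_eq_zero S).mp ha
      simpa [hjA, hπ] using this
    obtain ⟨t, ht⟩ := this
    have : ((a, 0) : A × I) = (0, t) := hj ht.symm
    have := congrArg Prod.fst this
    simpa using this
  set pb : (X ⧸ S) →ₗ[R] M := S.liftQ p (fun x hx => LinearMap.mem_ker.mpr (hpS x hx)) with hpb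
  have hπsurj : Function.Surjective π := Submodule.mkQ_surjective S
  have hpbsurj : Function.Surjective pb := by
    intro m
    obtain ⟨x, hx⟩ := hp m
    exact ⟨π x, by simp [hpb, hπ, hx]⟩
  have hexb : Function.Exact jA pb := by
    intro y
    obtain ⟨x, rfl⟩ := hπsurj y
    constructor
    · intro hy
      have hpx : p x = 0 := by simpa [hpb, hπ] using hy
      obtain ⟨⟨a, t⟩, hat⟩ := (hex x).mp hpx
      refine ⟨a, ?_⟩
      have hmem : x - j (a, 0) ∈ S := by
        refine ⟨t, ?_⟩
        have hsub : ((a, t) : A × I) - (a, 0) = (0, t) := by simp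
        calc (j ∘ₗ LinearMap.inr R A I) t = j (0, t) := rfl
          _ = j ((a, t) - (a, 0)) := by rw [hsub]
          _ = x - j (a, 0) := by rw [map_sub, hat]
      have := (Submodule.Quotient.eq S).mpr hmem
      simpa [hjA, hπ] using this.symm
    · rintro ⟨a, ha⟩
      rw [← ha]
      have : p (j (a, 0)) = 0 := hex.apply_apply_eq_zero _
      simp [hjA, hpb, hπ, this]
  obtain ⟨sb, hsb⟩ := hA (X ⧸ S) jA pb hjAinj hpbsurj hexb
  obtain ⟨h, hh⟩ := hI.out (j ∘ₗ LinearMap.inr R A I)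
    (hj.comp (fun a b hab => by simpa using congrArg Prod.snd hab)) LinearMap.id
  have hσkill : ∀ x ∈ S, ((LinearMap.id : X →ₗ[R] X) - (j ∘ₗ LinearMap.inr R A I) ∘ₗ h) x = 0 := by
    rintro x ⟨t, rfl⟩
    have := hh t
    simp only [LinearMap.sub_apply, LinearMap.id_apply, LinearMap.comp_apply] at this ⊢
    rw [this]
    simp
  set σ : (X ⧸ S) →ₗ[R] X := S.liftQ _ (fun x hx => LinearMap.mem_ker.mpr (hσkill x hx)) with hσ
  have hpσ : ∀ y, p (σ y) = pb y := by
    intro y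
    obtain ⟨x, rfl⟩ := hπsurj y
    have h4 : (π x : X ⧸ S) = Submodule.Quotient.mk x := rfl
    have h1 : σ (Submodule.Quotient.mk x) = x - j (0, h x) := by
      have : σ (Submodule.Quotient.mk x)
          = ((LinearMap.id : X →ₗ[R] X) - (j ∘ₗ LinearMap.inr R A I) ∘ₗ h) x := by
        simp [hσ]
      rw [this]
      simp only [LinearMap.sub_apply, LinearMap.id_apply, LinearMap.comp_apply]
      rfl
    have h2 : p (j (0, h x)) = 0 := hex.apply_apply_eq_zero _
    have h3 : pb (Submodule.Quotient.mk x) = p x := by simp [hpb]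
    rw [h4, h1, map_sub, h2, sub_zero, h3]
  refine ⟨σ ∘ₗ sb, ?_⟩
  ext m
  have h5 : pb (sb m) = m := by
    have := LinearMap.ext_iff.mp hsb m; simpa using this
  simp [hpσ, h5]

theorem extVanish_prod_right' (h : ExtVanish (R := R) M (A × I)) :
    ExtVanish (R := R) M A := by
  intro X _ _ i p hi hp hex
  set i' : A × I →ₗ[R] X × I := i.prodMap LinearMap.id with hi'd
  set p' : X × I →ₗ[R] M := p ∘ₗ LinearMap.fst R X I with hp'd
  have hex' : Function.Exact i' p' := by
    intro z
    constructor
    · intro hz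
      obtain ⟨a, ha⟩ := (hex z.1).mp (by simpa [hp'd] using hz)
      refine ⟨(a, z.2), ?_⟩
      have : i' (a, z.2) = (z.1, z.2) := Prod.ext (by simpa [hi'd] using ha) (by simp [hi'd])
      simpa using this
    · rintro ⟨⟨a, t'⟩, hn⟩
      rw [← hn]
      have : p (i a) = 0 := hex.apply_apply_eq_zero a
      simp [hi'd, hp'd, this]
  obtain ⟨s', hs'⟩ := h (X × I) i' p'
    (fun z w hzw => by
      have h1 := hi (congrArg Prod.fst hzw)
      have h2 := congrArg Prod.snd hzw
      exact Prod.ext h1 (by simpa [hi'd] using h2))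
    (fun m => by
      obtain ⟨x, hx⟩ := hp m
      exact ⟨(x, 0), by simp [hp'd, hx]⟩)
    hex'
  refine ⟨(LinearMap.fst R X I) ∘ₗ s', ?_⟩
  ext m
  exact LinearMap.ext_iff.mp hs' m

end ProdLemmas


section Schanuel

/-- A left-split short exact sequence gives a product decomposition. -/
noncomputable def leftSplitEquiv [AddCommGroup A] [Module R A] [AddCommGroup X] [Module R X]
    [AddCommGroup C] [Module R C] (a : A →ₗ[R] X) (b : X →ₗ[R] C)
    (hb : Function.Surjective b) (hex : Function.Exact a b)
    (r : X →ₗ[R] A) (hr : ∀ t, r (a t) = t) : X ≃ₗ[R] A × C := by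
  refine LinearEquiv.ofBijective (r.prod b) ⟨?_, ?_⟩
  · rw [injective_iff_map_eq_zero]
    intro x hx
    have h1 : b x = 0 := congrArg Prod.snd hx
    obtain ⟨t, rfl⟩ := (hex x).mp h1
    have h2 : r (a t) = 0 := congrArg Prod.fst hx
    rw [hr t] at h2
    rw [h2, map_zero]
  · rintro ⟨t, c⟩
    obtain ⟨x₀, hx₀⟩ := hb c
    refine ⟨x₀ + a (t - r x₀), ?_⟩
    have hba : b (a (t - r x₀)) = 0 := hex.apply_apply_eq_zero _
    refine Prod.ext ?_ ?_
    · simp [hr]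
    · show b (x₀ + a (t - r x₀)) = c
      rw [map_add, hba, add_zero, hx₀]

theorem pullback_equiv [AddCommGroup M] [Module R M] [AddCommGroup P] [Module R P]
    [AddCommGroup P'] [Module R P'] (f : P →ₗ[R] M) (f' : P' →ₗ[R] M)
    (hf' : Function.Surjective f') (hP : Module.Projective R P) :
    Nonempty
      ((↥(LinearMap.ker ((f ∘ₗ LinearMap.fst R P P') - (f' ∘ₗ LinearMap.snd R P P'))))
        ≃ₗ[R] (↥(LinearMap.ker f') × P)) := by
  set D : P × P' →ₗ[R] M := (f ∘ₗ LinearMap.fst R P P') - (f' ∘ₗ LinearMap.snd R P P') with hD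
  have hmemD : ∀ z : P × P', z ∈ LinearMap.ker D ↔ f z.1 = f' z.2 := by
    intro z
    simp [hD, LinearMap.mem_ker, sub_eq_zero]
  set π : ↥(LinearMap.ker D) →ₗ[R] P := LinearMap.fst R P P' ∘ₗ (LinearMap.ker D).subtype
    with hπ
  have hπsurj : Function.Surjective π := by
    intro p
    obtain ⟨p', hp'⟩ := hf' (f p)
    exact ⟨⟨(p, p'), (hmemD (p, p')).mpr hp'.symm⟩, rfl⟩
  letI := hP
  obtain ⟨σ, hσ⟩ := Module.projective_lifting_property π LinearMap.id hπsurj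
  have haMem : ∀ k : ↥(LinearMap.ker f'), ((0 : P), (k : P')) ∈ LinearMap.ker D := by
    intro k
    rw [hmemD]
    simp [k.2]
  set a : ↥(LinearMap.ker f') →ₗ[R] ↥(LinearMap.ker D) :=
    LinearMap.codRestrict (LinearMap.ker D)
      ((LinearMap.inr R P P') ∘ₗ (LinearMap.ker f').subtype)
        (fun k => show ((LinearMap.inr R P P') ∘ₗ (LinearMap.ker f').subtype) k ∈ LinearMap.ker D
          from haMem k) with ha
  have hπa : ∀ k, π (a k) = 0 := fun k => rfl
  have hrMem : ∀ z : ↥(LinearMap.ker D),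
      ((z : P × P') - ((σ (π z) : ↥(LinearMap.ker D)) : P × P')).2 ∈ LinearMap.ker f' := by
    intro z
    have hz : f (z : P × P').1 = f' (z : P × P').2 := (hmemD _).mp z.2
    have hw : f ((σ (π z) : ↥(LinearMap.ker D)) : P × P').1
        = f' ((σ (π z) : ↥(LinearMap.ker D)) : P × P').2 := (hmemD _).mp (σ (π z)).2
    have hfst : ((σ (π z) : ↥(LinearMap.ker D)) : P × P').1 = π z := by
      have := LinearMap.ext_iff.mp hσ (π z)
      simpa [hπ] using this
    have hπz : (z : P × P').1 = π z := rfl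
    simp only [LinearMap.mem_ker, Prod.snd_sub, map_sub]
    rw [← hz, ← hw, hfst, hπz, sub_self]
  set r : ↥(LinearMap.ker D) →ₗ[R] ↥(LinearMap.ker f') :=
    LinearMap.codRestrict (LinearMap.ker f')
      ((LinearMap.snd R P P') ∘ₗ
        ((LinearMap.ker D).subtype - (LinearMap.ker D).subtype ∘ₗ σ ∘ₗ π))
      (fun z => by simpa using hrMem z) with hr
  have hra : ∀ k, r (a k) = k := by
    intro k
    apply Subtype.ext
    have h1 : π (a k) = 0 := rfl
    have h2 : σ (π (a k)) = 0 := by rw [h1, map_zero]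
    simp only [hr, LinearMap.codRestrict_apply, LinearMap.comp_apply, LinearMap.sub_apply, h2,
      map_zero]
    simp [ha]
  have hexaπ : Function.Exact a π := by
    intro z
    constructor
    · intro hz
      have hf'z : (z : P × P').2 ∈ LinearMap.ker f' := by
        have := (hmemD _).mp z.2
        have h0 : (z : P × P').1 = (0 : P) := hz
        rw [h0, map_zero] at this
        simp [LinearMap.mem_ker, ← this]
      refine ⟨⟨(z : P × P').2, hf'z⟩, ?_⟩
      apply Subtype.ext
      have h0 : (z : P × P').1 = (0 : P) := hz
      exact Prod.ext (by simpa [ha] using h0.symm) rfl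
    · rintro ⟨k, rfl⟩
      rfl
  exact ⟨leftSplitEquiv a π hπsurj hexaπ r hra⟩

theorem schanuel [AddCommGroup M] [Module R M] [AddCommGroup P] [Module R P]
    [AddCommGroup P'] [Module R P'] (f : P →ₗ[R] M) (f' : P' →ₗ[R] M)
    (hf : Function.Surjective f) (hf' : Function.Surjective f')
    (hP : Module.Projective R P) (hP' : Module.Projective R P') :
    Nonempty ((↥(LinearMap.ker f) × P') ≃ₗ[R] (↥(LinearMap.ker f') × P)) := by
  obtain ⟨e₁⟩ := pullback_equiv f f' hf' hP
  obtain ⟨e₂⟩ := pullback_equiv f' f hf hP'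
  -- swap between the two pullbacks
  set D : P × P' →ₗ[R] M := (f ∘ₗ LinearMap.fst R P P') - (f' ∘ₗ LinearMap.snd R P P') with hD
  set D' : P' × P →ₗ[R] M := (f' ∘ₗ LinearMap.fst R P' P) - (f ∘ₗ LinearMap.snd R P' P) with hD'
  have hmem : ∀ z : P × P', z ∈ LinearMap.ker D → ((z.2, z.1) : P' × P) ∈ LinearMap.ker D' := by
    intro z hz
    simp only [hD, hD', LinearMap.mem_ker, LinearMap.sub_apply, LinearMap.comp_apply,
      LinearMap.fst_apply, LinearMap.snd_apply, sub_eq_zero] at hz ⊢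
    exact hz.symm
  have hmem' : ∀ z : P' × P, z ∈ LinearMap.ker D' → ((z.2, z.1) : P × P') ∈ LinearMap.ker D := by
    intro z hz
    simp only [hD', hD, LinearMap.mem_ker, LinearMap.sub_apply, LinearMap.comp_apply,
      LinearMap.fst_apply, LinearMap.snd_apply, sub_eq_zero] at hz ⊢
    exact hz.symm
  set sw : ↥(LinearMap.ker D) →ₗ[R] ↥(LinearMap.ker D') :=
    LinearMap.codRestrict _ (((LinearEquiv.prodComm R P P') : (P × P') →ₗ[R] (P' × P)) ∘ₗ
      (LinearMap.ker D).subtype) (fun z => hmem _ z.2) with hsw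
  set sw' : ↥(LinearMap.ker D') →ₗ[R] ↥(LinearMap.ker D) :=
    LinearMap.codRestrict _ (((LinearEquiv.prodComm R P' P) : (P' × P) →ₗ[R] (P × P')) ∘ₗ
      (LinearMap.ker D').subtype) (fun z => hmem' _ z.2) with hsw'
  have h1 : sw' ∘ₗ sw = LinearMap.id := by
    apply LinearMap.ext; intro z; apply Subtype.ext; rfl
  have h2 : sw ∘ₗ sw' = LinearMap.id := by
    apply LinearMap.ext; intro z; apply Subtype.ext; rfl
  let swe : ↥(LinearMap.ker D) ≃ₗ[R] ↥(LinearMap.ker D') :=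
    LinearEquiv.ofLinear sw sw' h2 h1
  exact ⟨e₂.symm.trans (swe.symm.trans e₁)⟩

theorem pushout_equiv [AddCommGroup N] [Module R N] [AddCommGroup I] [Module R I]
    [AddCommGroup I'] [Module R I'] (i : N →ₗ[R] I) (i' : N →ₗ[R] I')
    (hi' : Function.Injective i') (hI : Module.Injective R I) :
    Nonempty (((I × I') ⧸ LinearMap.range (i.prod (-i')))
      ≃ₗ[R] (I × (I' ⧸ LinearMap.range i'))) := by
  set S : Submodule R (I × I') := LinearMap.range (i.prod (-i')) with hS
  set a : I →ₗ[R] ((I × I') ⧸ S) := S.mkQ ∘ₗ LinearMap.inl R I I' with haD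
  have hainj : Function.Injective a := by
    rw [injective_iff_map_eq_zero]
    intro x hx
    have : ((x, 0) : I × I') ∈ S := by
      have := (Submodule.Quotient.mk_eq_zero S).mp (by simpa [haD] using hx)
      exact this
    obtain ⟨n, hn⟩ := this
    have h2 : -i' n = 0 := congrArg Prod.snd hn
    have h3 : n = 0 := hi' (by simpa using h2)
    have h1 : i n = x := congrArg Prod.fst hn
    rw [← h1, h3, map_zero]
  have hbk : ∀ z ∈ S, ((LinearMap.range i').mkQ ∘ₗ LinearMap.snd R I I') z = 0 := by
    rintro z ⟨n, rfl⟩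
    have h0 : (i.prod (-i')) n = (i n, -i' n) := rfl
    rw [h0]
    simp only [LinearMap.comp_apply, LinearMap.snd_apply, Submodule.mkQ_apply]
    rw [Submodule.Quotient.mk_eq_zero]
    exact ⟨-n, by simp⟩
  set b : ((I × I') ⧸ S) →ₗ[R] (I' ⧸ LinearMap.range i') :=
    S.liftQ ((LinearMap.range i').mkQ ∘ₗ LinearMap.snd R I I')
      (fun z hz => LinearMap.mem_ker.mpr (hbk z hz)) with hbD
  have hbsurj : Function.Surjective b := by
    intro c
    obtain ⟨y, rfl⟩ := Submodule.mkQ_surjective _ c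
    exact ⟨Submodule.Quotient.mk ((0 : I), y), by simp [hbD]⟩
  have hexab : Function.Exact a b := by
    intro z
    obtain ⟨⟨x, y⟩, rfl⟩ := Submodule.mkQ_surjective S z
    constructor
    · intro hz
      have : y ∈ LinearMap.range i' := by
        have h0 := hz
        simp only [hbD, Submodule.mkQ_apply, Submodule.liftQ_apply, LinearMap.comp_apply,
          LinearMap.snd_apply] at h0
        rwa [Submodule.Quotient.mk_eq_zero] at h0
      obtain ⟨n, hn⟩ := this
      refine ⟨x + i n, ?_⟩
      have hdiff : ((x + i n, 0) : I × I') - (x, y) ∈ S := by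
        refine ⟨n, ?_⟩
        have : (i.prod (-i')) n = (i n, -i' n) := rfl
        rw [this]
        refine Prod.ext (by simp) (by simp [hn])
      have := (Submodule.Quotient.eq S).mpr hdiff
      simpa [haD] using this
    · rintro ⟨x', hx'⟩
      rw [← hx']
      simp [haD, hbD, Submodule.mkQ_apply, Submodule.liftQ_apply]
  obtain ⟨r, hr⟩ := hI.out a hainj LinearMap.id
  exact ⟨leftSplitEquiv a b hbsurj hexab r (fun t => hr t)⟩

theorem coschanuel [AddCommGroup N] [Module R N] [AddCommGroup I] [Module R I]
    [AddCommGroup I'] [Module R I'] (i : N →ₗ[R] I) (i' : N →ₗ[R] I')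
    (hi : Function.Injective i) (hi' : Function.Injective i')
    (hI : Module.Injective R I) (hI' : Module.Injective R I') :
    Nonempty (((I ⧸ LinearMap.range i) × I') ≃ₗ[R] ((I' ⧸ LinearMap.range i') × I)) := by
  obtain ⟨e₁⟩ := pushout_equiv i i' hi' hI
  obtain ⟨e₂⟩ := pushout_equiv i' i hi hI'
  have hmap : (LinearMap.range (i'.prod (-i))).map
      ((LinearEquiv.prodComm R I' I : (I' × I) ≃ₗ[R] (I × I')) : (I' × I) →ₗ[R] (I × I'))
      = LinearMap.range (i.prod (-i')) := by
    apply le_antisymm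
    · rintro z ⟨w, ⟨n, rfl⟩, rfl⟩
      exact ⟨-n, by
        have h1 : (i'.prod (-i)) n = (i' n, -i n) := rfl
        have h2 : (i.prod (-i')) (-n) = (i (-n), -i' (-n)) := rfl
        rw [h2]
        simp [h1]⟩
    · rintro z ⟨n, rfl⟩
      refine ⟨(i' (-n), -i (-n)), ⟨-n, rfl⟩, ?_⟩
      have : (i.prod (-i')) n = (i n, -i' n) := rfl
      rw [this]
      simp
  let swq : ((I' × I) ⧸ LinearMap.range (i'.prod (-i)))
      ≃ₗ[R] ((I × I') ⧸ LinearMap.range (i.prod (-i'))) :=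
    Submodule.Quotient.equiv _ _ (LinearEquiv.prodComm R I' I) hmap
  exact ⟨(LinearEquiv.prodComm R _ _).trans
    (e₂.symm.trans (swq.trans (e₁.trans (LinearEquiv.prodComm R _ _))))⟩

end Schanuel


section Canonical

variable (R)

/-- The canonical free cover of `M`. -/
noncomputable def tot (M : Type u) [AddCommGroup M] [Module R M] : (M →₀ R) →ₗ[R] M :=
  Finsupp.linearCombination R id

theorem tot_surjective (M : Type u) [AddCommGroup M] [Module R M] :
    Function.Surjective (tot R M) :=
  Finsupp.linearCombination_surjective R Function.surjective_id

theorem projective_finsupp (M : Type u) [AddCommGroup M] [Module R M] :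
    Module.Projective R (M →₀ R) := inferInstance

/-- The canonical syzygy of `M`. -/
abbrev Syz (M : Type u) [AddCommGroup M] [Module R M] : Type u :=
  ↥(LinearMap.ker (tot R M))

theorem exists_injEmb (N : Type u) [AddCommGroup N] [Module R N] :
    ∃ (I : Type u) (_ : AddCommGroup I) (_ : Module R I) (f : N →ₗ[R] I),
      Module.Injective R I ∧ Function.Injective f := by
  let NC : ModuleCat.{u} R := ModuleCat.of R N
  let J := CategoryTheory.Injective.under NC
  let ι : NC ⟶ J := CategoryTheory.Injective.ι NC
  haveI : CategoryTheory.Injective (ModuleCat.of R (↑J : Type u)) :=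
    CategoryTheory.Injective.injective_under NC
  refine ⟨J, inferInstance, inferInstance, ι.hom, ?_, ?_⟩
  · exact Module.injective_module_of_injective_object R J
  · exact (ModuleCat.mono_iff_injective ι).mp inferInstance

/-- A bundled embedding into an injective module. -/
structure InjEmb (N : Type u) [AddCommGroup N] [Module R N] where
  I : Type u
  [grp : AddCommGroup I]
  [mod : Module R I]
  inj : Module.Injective R I
  f : N →ₗ[R] I
  hf : Function.Injective f

attribute [instance] InjEmb.grp InjEmb.mod

noncomputable def jemb (N : Type u) [AddCommGroup N] [Module R N] : InjEmb R N :=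
  Classical.choice <| by
    obtain ⟨I, g, m, f, h1, h2⟩ := exists_injEmb R N
    letI := g; letI := m
    exact ⟨⟨I, h1, f, h2⟩⟩

/-- The canonical cosyzygy of `N`. -/
abbrev Cosyz (N : Type u) [AddCommGroup N] [Module R N] : Type u :=
  (jemb R N).I ⧸ LinearMap.range (jemb R N).f

/-- `Dv k M N` is the statement `Ext^{k+1}(M, N) = 0`, computed via syzygies of `M`. -/
def Dv : ℕ → ∀ (M : Type u) [AddCommGroup M] [Module R M],
    ∀ (N : Type u) [AddCommGroup N] [Module R N], Prop
  | 0, M, _, _, N, _, _ => ExtVanish (R := R) M N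
  | (k+1), M, _, _, N, _, _ => Dv k (Syz R M) N

/-- `Ev k M N` is the statement `Ext^{k+1}(M, N) = 0`, computed via cosyzygies of `N`. -/
def Ev : ℕ → ∀ (M : Type u) [AddCommGroup M] [Module R M],
    ∀ (N : Type u) [AddCommGroup N] [Module R N], Prop
  | 0, M, _, _, N, _, _ => ExtVanish (R := R) M N
  | (k+1), M, _, _, N, _, _ => Ev k M (Cosyz R N)

end Canonical


section DvLemmas

theorem ker_projective_of_section {F M : Type u} [AddCommGroup F] [Module R F]
    [AddCommGroup M] [Module R M] (f : F →ₗ[R] M) (hF : Module.Projective R F)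
    (s : M →ₗ[R] F) (hs : f ∘ₗ s = LinearMap.id) :
    Module.Projective R ↥(LinearMap.ker f) := by
  letI := hF
  have hmem : ∀ x : F, x - s (f x) ∈ LinearMap.ker f := by
    intro x
    have := LinearMap.ext_iff.mp hs (f x)
    simp only [LinearMap.comp_apply, LinearMap.id_apply] at this
    simp [LinearMap.mem_ker, this]
  refine Module.Projective.of_split (LinearMap.ker f).subtype
    (LinearMap.codRestrict _ (LinearMap.id - s ∘ₗ f) hmem) ?_
  apply LinearMap.ext
  intro z
  apply Subtype.ext
  have hz : f (z : F) = 0 := z.2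
  show (z : F) - s (f (z : F)) = (z : F)
  rw [hz, map_zero, sub_zero]

theorem syz_projective_of_projective (M : Type u) [AddCommGroup M] [Module R M]
    (hM : Module.Projective R M) : Module.Projective R (Syz R M) := by
  letI := hM
  obtain ⟨s, hs⟩ := Module.projective_lifting_property (tot R M) LinearMap.id
    (tot_surjective R M)
  exact ker_projective_of_section (tot R M) inferInstance s hs

theorem dv_projective : ∀ (k : ℕ) (M : Type u) [AddCommGroup M] [Module R M]
    (N : Type u) [AddCommGroup N] [Module R N],
    Module.Projective R M → Dv R k M N
  | 0, M, _, _, N, _, _, hM => extVanish_of_projective hM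
  | (k+1), M, _, _, N, _, _, hM =>
    dv_projective k (Syz R M) N (syz_projective_of_projective M hM)

theorem dv_aux : ∀ (k : ℕ),
    (∀ (M : Type u) [AddCommGroup M] [Module R M], ∀ (M' : Type u) [AddCommGroup M']
      [Module R M'], ∀ (N : Type u) [AddCommGroup N] [Module R N],
      (M ≃ₗ[R] M') → Dv R k M N → Dv R k M' N) ∧
    (∀ (A : Type u) [AddCommGroup A] [Module R A], ∀ (Q : Type u) [AddCommGroup Q]
      [Module R Q], ∀ (N : Type u) [AddCommGroup N] [Module R N],
      Module.Projective R Q → (Dv R k (A × Q) N ↔ Dv R k A N))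
  | 0 => by
    constructor
    · intro M _ _ M' _ _ N _ _ e h
      exact extVanish_iso_left e h
    · intro A _ _ Q _ _ N _ _ hQ
      exact ⟨fun h => extVanish_prod_left' h, fun h => extVanish_prod_left h hQ⟩
  | (k+1) => by
    obtain ⟨ih_iso, ih_prod⟩ := dv_aux k
    have transfer : ∀ (B : Type u) [AddCommGroup B] [Module R B],
        ∀ (B' : Type u) [AddCommGroup B'] [Module R B'],
        ∀ (Q : Type u) [AddCommGroup Q] [Module R Q],
        ∀ (Q' : Type u) [AddCommGroup Q'] [Module R Q'],
        ∀ (N : Type u) [AddCommGroup N] [Module R N],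
        Module.Projective R Q → Module.Projective R Q' →
        ((B × Q) ≃ₗ[R] (B' × Q')) → (Dv R k B N ↔ Dv R k B' N) := by
      intro B _ _ B' _ _ Q _ _ Q' _ _ N _ _ hQ hQ' e
      constructor
      · intro h
        exact (ih_prod B' Q' N hQ').mp
          (ih_iso (B × Q) (B' × Q') N e ((ih_prod B Q N hQ).mpr h))
      · intro h
        exact (ih_prod B Q N hQ).mp
          (ih_iso (B' × Q') (B × Q) N e.symm ((ih_prod B' Q' N hQ').mpr h))
    constructor
    · intro M _ _ M' _ _ N _ _ e h
      -- Schanuel between the canonical covers of M and M'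
      have hf' : Function.Surjective ((e.symm : M' →ₗ[R] M) ∘ₗ tot R M') := by
        intro m
        obtain ⟨x, hx⟩ := tot_surjective R M' (e m)
        exact ⟨x, by simp [hx]⟩
      obtain ⟨es⟩ := schanuel (tot R M) ((e.symm : M' →ₗ[R] M) ∘ₗ tot R M')
        (tot_surjective R M) hf' (projective_finsupp R M) (projective_finsupp R M')
      have hkereq : LinearMap.ker ((e.symm : M' →ₗ[R] M) ∘ₗ tot R M')
          = LinearMap.ker (tot R M') := by
        ext x
        simp only [LinearMap.mem_ker, LinearMap.comp_apply]
        constructor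
        · intro hx
          have := congrArg e hx
          simpa using this
        · intro hx
          rw [hx]; simp
      have ekn : ↥(LinearMap.ker ((e.symm : M' →ₗ[R] M) ∘ₗ tot R M')) ≃ₗ[R] Syz R M' :=
        LinearEquiv.ofEq _ _ hkereq
      have ebig : (Syz R M × (M' →₀ R)) ≃ₗ[R] (Syz R M' × (M →₀ R)) :=
        es.trans (LinearEquiv.prodCongr ekn (LinearEquiv.refl R (M →₀ R)))
      exact (transfer (Syz R M) (Syz R M') (M' →₀ R) (M →₀ R) N
        (projective_finsupp R M') (projective_finsupp R M) ebig).mp h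
    · intro A _ _ Q _ _ N _ _ hQ
      letI := hQ
      have hf' : Function.Surjective ((tot R A).prodMap (LinearMap.id : Q →ₗ[R] Q)) := by
        rintro ⟨a, q⟩
        obtain ⟨x, hx⟩ := tot_surjective R A a
        exact ⟨(x, q), by
          have h0 : (tot R A).prodMap (LinearMap.id : Q →ₗ[R] Q) (x, q) = (tot R A x, q) := rfl
          rw [h0, hx]⟩
      obtain ⟨es⟩ := schanuel (tot R (A × Q)) ((tot R A).prodMap (LinearMap.id : Q →ₗ[R] Q))
        (tot_surjective R (A × Q)) hf' (projective_finsupp R (A × Q)) inferInstance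
      -- kernel of the product cover is `Syz R A`
      have hmem1 : ∀ z : ↥(LinearMap.ker ((tot R A).prodMap (LinearMap.id : Q →ₗ[R] Q))),
          (z : (A →₀ R) × Q).1 ∈ LinearMap.ker (tot R A) := by
        intro z
        have hz : (tot R A).prodMap (LinearMap.id : Q →ₗ[R] Q) (z : (A →₀ R) × Q) = 0 := z.2
        have h0 : ((tot R A).prodMap (LinearMap.id : Q →ₗ[R] Q) (z : (A →₀ R) × Q)).1
            = tot R A (z : (A →₀ R) × Q).1 := rfl
        rw [LinearMap.mem_ker, ← h0, hz]
        rfl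
      have hmem2 : ∀ w : Syz R A, (((w : A →₀ R), (0 : Q)) : (A →₀ R) × Q)
          ∈ LinearMap.ker ((tot R A).prodMap (LinearMap.id : Q →ₗ[R] Q)) := by
        intro w
        have hw : tot R A (w : A →₀ R) = 0 := w.2
        have h0 : (tot R A).prodMap (LinearMap.id : Q →ₗ[R] Q) ((w : A →₀ R), (0 : Q))
            = (tot R A (w : A →₀ R), 0) := rfl
        rw [LinearMap.mem_ker, h0, hw]
        rfl
      have ekn : ↥(LinearMap.ker ((tot R A).prodMap (LinearMap.id : Q →ₗ[R] Q)))
          ≃ₗ[R] Syz R A := by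
        refine LinearEquiv.ofLinear
          (LinearMap.codRestrict _ ((LinearMap.fst R (A →₀ R) Q) ∘ₗ
            (LinearMap.ker ((tot R A).prodMap (LinearMap.id : Q →ₗ[R] Q))).subtype) hmem1)
          (LinearMap.codRestrict _ ((LinearMap.inl R (A →₀ R) Q) ∘ₗ
            (LinearMap.ker (tot R A)).subtype) hmem2) ?_ ?_
        · apply LinearMap.ext; intro w; apply Subtype.ext; rfl
        · apply LinearMap.ext; intro z; apply Subtype.ext
          have hz : (tot R A).prodMap (LinearMap.id : Q →ₗ[R] Q) (z : (A →₀ R) × Q) = 0 := z.2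
          have hsnd : (z : (A →₀ R) × Q).2 = 0 := by
            have h0 : ((tot R A).prodMap (LinearMap.id : Q →ₗ[R] Q) (z : (A →₀ R) × Q)).2
                = (z : (A →₀ R) × Q).2 := rfl
            rw [← h0, hz]; rfl
          show (((z : (A →₀ R) × Q).1, (0 : Q)) : (A →₀ R) × Q) = (z : (A →₀ R) × Q)
          exact Prod.ext rfl hsnd.symm
      have ebig : (Syz R (A × Q) × ((A →₀ R) × Q)) ≃ₗ[R] (Syz R A × ((A × Q) →₀ R)) :=
        es.trans (LinearEquiv.prodCongr ekn (LinearEquiv.refl R _))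
      exact transfer (Syz R (A × Q)) (Syz R A) ((A →₀ R) × Q) ((A × Q) →₀ R) N
        inferInstance (projective_finsupp R (A × Q)) ebig

theorem dv_iso_left {M M' N : Type u} [AddCommGroup M] [Module R M] [AddCommGroup M']
    [Module R M'] [AddCommGroup N] [Module R N] (k : ℕ) (e : M ≃ₗ[R] M')
    (h : Dv R k M N) : Dv R k M' N :=
  (dv_aux k).1 M M' N e h

theorem dv_prod_left {A Q N : Type u} [AddCommGroup A] [Module R A] [AddCommGroup Q]
    [Module R Q] [AddCommGroup N] [Module R N] (k : ℕ) (hQ : Module.Projective R Q) :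
    Dv R k (A × Q) N ↔ Dv R k A N :=
  (dv_aux k).2 A Q N hQ

/-- Dimension shifting: if the kernel of some projective cover has vanishing `Ext^{k+1}`,
then `Ext^{k+2}(M, N) = 0`. -/
theorem dv_of_ses {M P N : Type u} [AddCommGroup M] [Module R M] [AddCommGroup P]
    [Module R P] [AddCommGroup N] [Module R N] (k : ℕ) (f : P →ₗ[R] M)
    (hf : Function.Surjective f) (hP : Module.Projective R P)
    (h : Dv R k (↥(LinearMap.ker f)) N) : Dv R (k + 1) M N := by
  obtain ⟨es⟩ := schanuel (tot R M) f (tot_surjective R M) hf (projective_finsupp R M) hP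
  show Dv R k (Syz R M) N
  have h1 : Dv R k (↥(LinearMap.ker f) × (M →₀ R)) N :=
    (dv_prod_left k (projective_finsupp R M)).mpr h
  have h2 : Dv R k (Syz R M × P) N := dv_iso_left k es.symm h1
  exact (dv_prod_left k hP).mp h2

theorem pdLE_of_dv : ∀ (n : ℕ) (M : Type u) [AddCommGroup M] [Module R M],
    (∀ (N : Type u) [AddCommGroup N] [Module R N], Dv R n M N) → pdLE R n M
  | 0, M, _, _, h => by
    show Module.Projective R M
    have hev : ExtVanish (R := R) M (Syz R M) := h (Syz R M)
    have hex : Function.Exact (LinearMap.ker (tot R M)).subtype (tot R M) := by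
      intro x
      constructor
      · intro hx
        exact ⟨⟨x, hx⟩, rfl⟩
      · rintro ⟨⟨y, hy⟩, rfl⟩
        exact hy
    obtain ⟨s, hs⟩ := hev (M →₀ R) (LinearMap.ker (tot R M)).subtype (tot R M)
      (Submodule.injective_subtype _) (tot_surjective R M) hex
    exact Module.projective_def'.mpr ⟨s, hs⟩
  | (n+1), M, _, _, h =>
    ⟨M →₀ R, inferInstance, inferInstance, tot R M, projective_finsupp R M,
      tot_surjective R M, pdLE_of_dv n (Syz R M) (fun N _ _ => h N)⟩

theorem dv_of_pdLE : ∀ (n : ℕ) (M : Type u) [AddCommGroup M] [Module R M],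
    pdLE R n M → ∀ (N : Type u) [AddCommGroup N] [Module R N], Dv R n M N
  | 0, M, _, _, h, N, _, _ => extVanish_of_projective h
  | (n+1), M, _, _, ⟨P, _, _, f, hP, hf, hker⟩, N, _, _ =>
    dv_of_ses n f hf hP (dv_of_pdLE n _ hker N)

end DvLemmas


section EvLemmas

theorem exact_mkQ {N I : Type u} [AddCommGroup N] [Module R N] [AddCommGroup I] [Module R I]
    (f : N →ₗ[R] I) : Function.Exact f (LinearMap.range f).mkQ := by
  intro x
  rw [Submodule.mkQ_apply, Submodule.Quotient.mk_eq_zero]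
  exact ⟨fun ⟨y, hy⟩ => ⟨y, hy⟩, fun ⟨y, hy⟩ => ⟨y, hy⟩⟩

theorem cosyz_injective_of_injective (N : Type u) [AddCommGroup N] [Module R N]
    (hN : Module.Injective R N) : Module.Injective R (Cosyz R N) := by
  obtain ⟨r, hr⟩ := hN.out (jemb R N).f (jemb R N).hf LinearMap.id
  have e := leftSplitEquiv (jemb R N).f (LinearMap.range (jemb R N).f).mkQ
    (Submodule.mkQ_surjective _) (exact_mkQ (jemb R N).f) r (fun t => hr t)
  refine injective_of_retraction
    ((e.symm : (N × Cosyz R N) →ₗ[R] (jemb R N).I) ∘ₗ LinearMap.inr R N (Cosyz R N))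
    ((LinearMap.snd R N (Cosyz R N)) ∘ₗ (e : (jemb R N).I →ₗ[R] N × Cosyz R N))
    ?_ (jemb R N).inj
  apply LinearMap.ext
  intro c
  simp

theorem ev_injective : ∀ (k : ℕ) (M : Type u) [AddCommGroup M] [Module R M]
    (N : Type u) [AddCommGroup N] [Module R N],
    Module.Injective R N → Ev R k M N
  | 0, M, _, _, N, _, _, hN => extVanish_of_injective hN
  | (k+1), M, _, _, N, _, _, hN =>
    ev_injective k M (Cosyz R N) (cosyz_injective_of_injective N hN)

theorem ev_aux : ∀ (k : ℕ),
    (∀ (M : Type u) [AddCommGroup M] [Module R M], ∀ (N : Type u) [AddCommGroup N]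
      [Module R N], ∀ (N' : Type u) [AddCommGroup N'] [Module R N'],
      (N ≃ₗ[R] N') → Ev R k M N → Ev R k M N') ∧
    (∀ (M : Type u) [AddCommGroup M] [Module R M], ∀ (A : Type u) [AddCommGroup A]
      [Module R A], ∀ (I : Type u) [AddCommGroup I] [Module R I],
      Module.Injective R I → (Ev R k M (A × I) ↔ Ev R k M A))
  | 0 => by
    constructor
    · intro M _ _ N _ _ N' _ _ e h
      exact extVanish_iso_right e h
    · intro M _ _ A _ _ I _ _ hI
      exact ⟨fun h => extVanish_prod_right' h, fun h => extVanish_prod_right h hI⟩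
  | (k+1) => by
    obtain ⟨ih_iso, ih_prod⟩ := ev_aux k
    have transfer : ∀ (M : Type u) [AddCommGroup M] [Module R M],
        ∀ (B : Type u) [AddCommGroup B] [Module R B],
        ∀ (B' : Type u) [AddCommGroup B'] [Module R B'],
        ∀ (I : Type u) [AddCommGroup I] [Module R I],
        ∀ (I' : Type u) [AddCommGroup I'] [Module R I'],
        Module.Injective R I → Module.Injective R I' →
        ((B × I) ≃ₗ[R] (B' × I')) → (Ev R k M B ↔ Ev R k M B') := by
      intro M _ _ B _ _ B' _ _ I _ _ I' _ _ hI hI' e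
      constructor
      · intro h
        exact (ih_prod M B' I' hI').mp
          (ih_iso M (B × I) (B' × I') e ((ih_prod M B I hI).mpr h))
      · intro h
        exact (ih_prod M B I hI).mp
          (ih_iso M (B' × I') (B × I) e.symm ((ih_prod M B' I' hI').mpr h))
    constructor
    · intro M _ _ N _ _ N' _ _ e h
      -- co-Schanuel between the canonical embeddings of N and N'
      have hinj2 : Function.Injective ((jemb R N').f ∘ₗ (e : N →ₗ[R] N')) :=
        (jemb R N').hf.comp e.injective
      obtain ⟨es⟩ := coschanuel (jemb R N).f ((jemb R N').f ∘ₗ (e : N →ₗ[R] N'))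
        (jemb R N).hf hinj2 (jemb R N).inj (jemb R N').inj
      have hrange : LinearMap.range ((jemb R N').f ∘ₗ (e : N →ₗ[R] N'))
          = LinearMap.range (jemb R N').f := by
        ext x
        constructor
        · rintro ⟨n, rfl⟩
          exact ⟨e n, rfl⟩
        · rintro ⟨n', rfl⟩
          exact ⟨e.symm n', by simp⟩
      have eq2 : ((jemb R N').I ⧸ LinearMap.range ((jemb R N').f ∘ₗ (e : N →ₗ[R] N')))
          ≃ₗ[R] Cosyz R N' := Submodule.quotEquivOfEq _ _ hrange
      have ebig : (Cosyz R N × (jemb R N').I) ≃ₗ[R] (Cosyz R N' × (jemb R N).I) :=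
        es.trans (LinearEquiv.prodCongr eq2 (LinearEquiv.refl R _))
      exact (transfer M (Cosyz R N) (Cosyz R N') (jemb R N').I (jemb R N).I
        (jemb R N').inj (jemb R N).inj ebig).mp h
    · intro M _ _ A _ _ I _ _ hI
      -- co-Schanuel between the canonical embedding of `A × I` and the product embedding
      have hinj2 : Function.Injective ((jemb R A).f.prodMap (LinearMap.id : I →ₗ[R] I)) := by
        intro z w hzw
        have h1 := (jemb R A).hf (congrArg Prod.fst hzw)
        have h2 := congrArg Prod.snd hzw
        exact Prod.ext h1 h2
      obtain ⟨es⟩ := coschanuel (jemb R (A × I)).f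
        ((jemb R A).f.prodMap (LinearMap.id : I →ₗ[R] I))
        (jemb R (A × I)).hf hinj2 (jemb R (A × I)).inj (injective_prod (jemb R A).inj hI)
      -- the quotient by the product embedding is `Cosyz R A`
      have hkill1 : ∀ x ∈ LinearMap.range ((jemb R A).f.prodMap (LinearMap.id : I →ₗ[R] I)),
          ((LinearMap.range (jemb R A).f).mkQ ∘ₗ LinearMap.fst R (jemb R A).I I) x = 0 := by
        rintro x ⟨⟨a, i⟩, rfl⟩
        have h0 : ((jemb R A).f.prodMap (LinearMap.id : I →ₗ[R] I)) (a, i)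
            = ((jemb R A).f a, i) := rfl
        rw [h0]
        simp only [LinearMap.comp_apply, LinearMap.fst_apply, Submodule.mkQ_apply]
        rw [Submodule.Quotient.mk_eq_zero]
        exact ⟨a, rfl⟩
      have hkill2 : ∀ x ∈ LinearMap.range (jemb R A).f,
          ((LinearMap.range ((jemb R A).f.prodMap (LinearMap.id : I →ₗ[R] I))).mkQ ∘ₗ
            LinearMap.inl R (jemb R A).I I) x = 0 := by
        rintro x ⟨a, rfl⟩
        simp only [LinearMap.comp_apply, LinearMap.inl_apply, Submodule.mkQ_apply]
        rw [Submodule.Quotient.mk_eq_zero]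
        exact ⟨(a, 0), rfl⟩
      have eq2 : (((jemb R A).I × I) ⧸
            LinearMap.range ((jemb R A).f.prodMap (LinearMap.id : I →ₗ[R] I)))
          ≃ₗ[R] Cosyz R A := by
        refine LinearEquiv.ofLinear
          (Submodule.liftQ _ ((LinearMap.range (jemb R A).f).mkQ ∘ₗ
            LinearMap.fst R (jemb R A).I I) (fun x hx => LinearMap.mem_ker.mpr (hkill1 x hx)))
          (Submodule.liftQ _ ((LinearMap.range ((jemb R A).f.prodMap
            (LinearMap.id : I →ₗ[R] I))).mkQ ∘ₗ LinearMap.inl R (jemb R A).I I)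
              (fun x hx => LinearMap.mem_ker.mpr (hkill2 x hx)))
          ?_ ?_
        · apply Submodule.linearMap_qext
          apply LinearMap.ext
          intro x
          simp
        · apply Submodule.linearMap_qext
          apply LinearMap.ext
          rintro ⟨x, y⟩
          simp only [LinearMap.comp_apply, Submodule.mkQ_apply, Submodule.liftQ_apply,
            LinearMap.fst_apply, LinearMap.inl_apply, LinearMap.id_comp]
          rw [Submodule.Quotient.eq]
          exact ⟨(0, -y), by
            have h0 : ((jemb R A).f.prodMap (LinearMap.id : I →ₗ[R] I)) (0, -y)
                = ((jemb R A).f 0, -y) := rfl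
            rw [h0, map_zero]
            refine Prod.ext (by simp) (by simp)⟩
      have ebig : (Cosyz R (A × I) × ((jemb R A).I × I))
          ≃ₗ[R] (Cosyz R A × (jemb R (A × I)).I) :=
        es.trans (LinearEquiv.prodCongr eq2 (LinearEquiv.refl R _))
      exact transfer M (Cosyz R (A × I)) (Cosyz R A) ((jemb R A).I × I) (jemb R (A × I)).I
        (injective_prod (jemb R A).inj hI) (jemb R (A × I)).inj ebig

theorem ev_iso_right {M N N' : Type u} [AddCommGroup M] [Module R M] [AddCommGroup N]
    [Module R N] [AddCommGroup N'] [Module R N'] (k : ℕ) (e : N ≃ₗ[R] N')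
    (h : Ev R k M N) : Ev R k M N' :=
  (ev_aux k).1 M N N' e h

theorem ev_prod_right {M A I : Type u} [AddCommGroup M] [Module R M] [AddCommGroup A]
    [Module R A] [AddCommGroup I] [Module R I] (k : ℕ) (hI : Module.Injective R I) :
    Ev R k M (A × I) ↔ Ev R k M A :=
  (ev_aux k).2 M A I hI

theorem ev_of_ses {M N I : Type u} [AddCommGroup M] [Module R M] [AddCommGroup N]
    [Module R N] [AddCommGroup I] [Module R I] (k : ℕ) (f : N →ₗ[R] I)
    (hf : Function.Injective f) (hI : Module.Injective R I)
    (h : Ev R k M (I ⧸ LinearMap.range f)) : Ev R (k + 1) M N := by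
  obtain ⟨es⟩ := coschanuel (jemb R N).f f (jemb R N).hf hf (jemb R N).inj hI
  show Ev R k M (Cosyz R N)
  have h1 : Ev R k M ((I ⧸ LinearMap.range f) × (jemb R N).I) :=
    (ev_prod_right k (jemb R N).inj).mpr h
  have h2 : Ev R k M (Cosyz R N × I) := ev_iso_right k es.symm h1
  exact (ev_prod_right k hI).mp h2

theorem idLE_of_ev : ∀ (n : ℕ) (N : Type u) [AddCommGroup N] [Module R N],
    (∀ (M : Type u) [AddCommGroup M] [Module R M], Ev R n M N) → idLE R n N
  | 0, N, _, _, h => by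
    show Module.Injective R N
    have hev : ExtVanish (R := R) (Cosyz R N) N := h (Cosyz R N)
    obtain ⟨s, hs⟩ := hev (jemb R N).I (jemb R N).f (LinearMap.range (jemb R N).f).mkQ
      (jemb R N).hf (Submodule.mkQ_surjective _) (exact_mkQ (jemb R N).f)
    -- build a retraction of the embedding
    have hmem : ∀ x : (jemb R N).I,
        x - s ((LinearMap.range (jemb R N).f).mkQ x) ∈ LinearMap.range (jemb R N).f := by
      intro x
      rw [← Submodule.Quotient.mk_eq_zero (LinearMap.range (jemb R N).f)]
      have hsx := LinearMap.ext_iff.mp hs ((LinearMap.range (jemb R N).f).mkQ x)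
      simp only [LinearMap.comp_apply, LinearMap.id_apply] at hsx
      have : Submodule.Quotient.mk (p := LinearMap.range (jemb R N).f)
          (x - s ((LinearMap.range (jemb R N).f).mkQ x))
          = (LinearMap.range (jemb R N).f).mkQ x
            - (LinearMap.range (jemb R N).f).mkQ (s ((LinearMap.range (jemb R N).f).mkQ x)) := by
        rw [← map_sub]
        rfl
      rw [this, hsx, sub_self]
    refine injective_of_retraction (jemb R N).f
      (((LinearEquiv.ofInjective (jemb R N).f (jemb R N).hf).symm :
          ↥(LinearMap.range (jemb R N).f) →ₗ[R] N) ∘ₗ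
        LinearMap.codRestrict _ (LinearMap.id - s ∘ₗ (LinearMap.range (jemb R N).f).mkQ)
          hmem) ?_ (jemb R N).inj
    apply LinearMap.ext
    intro n
    apply (LinearEquiv.ofInjective (jemb R N).f (jemb R N).hf).injective
    rw [LinearMap.comp_apply, LinearMap.comp_apply, LinearEquiv.coe_coe,
      LinearEquiv.apply_symm_apply]
    apply Subtype.ext
    have hπ : (LinearMap.range (jemb R N).f).mkQ ((jemb R N).f n) = 0 := by
      rw [Submodule.mkQ_apply, Submodule.Quotient.mk_eq_zero]
      exact ⟨n, rfl⟩
    show (jemb R N).f n - s ((LinearMap.range (jemb R N).f).mkQ ((jemb R N).f n))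
        = ((LinearEquiv.ofInjective (jemb R N).f (jemb R N).hf) (LinearMap.id n) :
            (jemb R N).I)
    rw [hπ, map_zero, sub_zero]
    rfl
  | (n+1), N, _, _, h =>
    ⟨(jemb R N).I, inferInstance, inferInstance, (jemb R N).f, (jemb R N).inj,
      (jemb R N).hf, idLE_of_ev n (Cosyz R N) (fun M _ _ => h M)⟩

theorem ev_of_idLE : ∀ (n : ℕ) (N : Type u) [AddCommGroup N] [Module R N],
    idLE R n N → ∀ (M : Type u) [AddCommGroup M] [Module R M], Ev R n M N
  | 0, N, _, _, h, M, _, _ => extVanish_of_injective h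
  | (n+1), N, _, _, ⟨I, _, _, f, hI, hf, hq⟩, M, _, _ =>
    ev_of_ses n f hf hI (ev_of_idLE n _ hq M)

end EvLemmas


section Swap

theorem exact_subtype_ker {F M : Type u} [AddCommGroup F] [Module R F] [AddCommGroup M]
    [Module R M] (f : F →ₗ[R] M) : Function.Exact (LinearMap.ker f).subtype f := by
  intro x
  constructor
  · intro hx
    exact ⟨⟨x, hx⟩, rfl⟩
  · rintro ⟨⟨y, hy⟩, rfl⟩
    exact hy

/-- `Ext¹(M, C) = 0` iff maps on a syzygy extend to the projective cover. -/
theorem extVanish_iff_extend {K P M C : Type u} [AddCommGroup K] [Module R K]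
    [AddCommGroup P] [Module R P] [AddCommGroup M] [Module R M] [AddCommGroup C] [Module R C]
    (k : K →ₗ[R] P) (p : P →ₗ[R] M) (hk : Function.Injective k)
    (hp : Function.Surjective p) (hex : Function.Exact k p) (hP : Module.Projective R P) :
    ExtVanish (R := R) M C ↔ ∀ f : K →ₗ[R] C, ∃ g : P →ₗ[R] C, g ∘ₗ k = f := by
  constructor
  · intro hev f
    set S : Submodule R (P × C) := LinearMap.range (k.prod (-f)) with hS
    have hprodapp : ∀ a : K, (k.prod (-f)) a = (k a, -f a) := fun a => rfl
    set jC : C →ₗ[R] ((P × C) ⧸ S) := S.mkQ ∘ₗ LinearMap.inr R P C with hjC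
    have hjCinj : Function.Injective jC := by
      rw [injective_iff_map_eq_zero]
      intro c hc
      have hmem : ((0 : P), c) ∈ S := by
        have := (Submodule.Quotient.mk_eq_zero S).mp (by simpa [hjC] using hc)
        exact this
      obtain ⟨a, ha⟩ := hmem
      rw [hprodapp] at ha
      have h1 : k a = 0 := congrArg Prod.fst ha
      have h2 : a = 0 := hk (by simpa using h1)
      have h3 : -f a = c := congrArg Prod.snd ha
      rw [← h3, h2, map_zero, neg_zero]
    have hqkill : ∀ z ∈ S, (p ∘ₗ LinearMap.fst R P C) z = 0 := by
      rintro z ⟨a, rfl⟩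
      rw [hprodapp]
      simpa using hex.apply_apply_eq_zero a
    set q : ((P × C) ⧸ S) →ₗ[R] M := S.liftQ (p ∘ₗ LinearMap.fst R P C)
        (fun z hz => LinearMap.mem_ker.mpr (hqkill z hz)) with hq
    have hqsurj : Function.Surjective q := by
      intro m
      obtain ⟨x, hx⟩ := hp m
      exact ⟨Submodule.Quotient.mk (x, 0), by simp [hq, Submodule.liftQ_apply, hx]⟩
    have hexq : Function.Exact jC q := by
      intro z
      obtain ⟨⟨x, c⟩, rfl⟩ := Submodule.mkQ_surjective S z
      constructor
      · intro hz
        have hpx : p x = 0 := by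
          simpa [hq, Submodule.liftQ_apply] using hz
        obtain ⟨a, ha⟩ := (hex x).mp hpx
        refine ⟨c + f a, ?_⟩
        have hdiff : ((0 : P), c + f a) - (x, c) ∈ S := by
          refine ⟨-a, ?_⟩
          rw [hprodapp]
          refine Prod.ext ?_ ?_
          · simp [← ha]
          · simp
        have := (Submodule.Quotient.eq S).mpr hdiff
        simpa [hjC] using this
      · rintro ⟨c', hc'⟩
        rw [← hc']
        simp [hjC, hq, Submodule.liftQ_apply]
    obtain ⟨s, hs⟩ := hev ((P × C) ⧸ S) jC q hjCinj hqsurj hexq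
    set e : P →ₗ[R] ((P × C) ⧸ S) := (S.mkQ ∘ₗ LinearMap.inl R P C) - s ∘ₗ p with he
    have hqe : ∀ x, q (e x) = 0 := by
      intro x
      have h1 : q (Submodule.Quotient.mk ((x, (0 : C)) : P × C)) = p x := by
        simp [hq, Submodule.liftQ_apply]
      have h2 : q (s (p x)) = p x := by
        have := LinearMap.ext_iff.mp hs (p x)
        simpa using this
      simp [he, h1, h2]
    have hemem : ∀ x, e x ∈ LinearMap.range jC := by
      intro x
      obtain ⟨c, hc⟩ := (hexq (e x)).mp (hqe x)
      exact ⟨c, hc⟩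
    set g : P →ₗ[R] C :=
      ((LinearEquiv.ofInjective jC hjCinj).symm : ↥(LinearMap.range jC) →ₗ[R] C) ∘ₗ
        LinearMap.codRestrict _ e hemem with hg
    have hjCg : ∀ x, jC (g x) = e x := by
      intro x
      have h0 : (LinearEquiv.ofInjective jC hjCinj) (g x) = ⟨e x, hemem x⟩ := by
        simp only [hg, LinearMap.comp_apply, LinearEquiv.coe_coe]
        rw [LinearEquiv.apply_symm_apply]
        rfl
      have := congrArg Subtype.val h0
      simpa only [LinearEquiv.ofInjective_apply] using this
    refine ⟨g, ?_⟩
    apply LinearMap.ext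
    intro a
    apply hjCinj
    have h4 : (g ∘ₗ (k : K →ₗ[R] P)) a = g (k a) := rfl
    rw [h4, hjCg (k a)]
    have hpk : p (k a) = 0 := hex.apply_apply_eq_zero a
    have hs0 : s (p (k a)) = 0 := by rw [hpk, map_zero]
    have hdiff : ((k a, 0) : P × C) - (0, f a) ∈ S := ⟨a, by
      rw [hprodapp]
      refine Prod.ext (by simp) (by simp)⟩
    have hmk : (Submodule.Quotient.mk ((k a, (0 : C)) : P × C) : (P × C) ⧸ S)
        = Submodule.Quotient.mk ((0 : P), f a) := (Submodule.Quotient.eq S).mpr hdiff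
    simp only [he, LinearMap.sub_apply, LinearMap.comp_apply, LinearMap.inl_apply, hs0,
      sub_zero, hjC, LinearMap.inr_apply, Submodule.mkQ_apply]
    exact hmk
  · intro hextend X _ _ jC q hjC hq hexq
    letI := hP
    obtain ⟨h, hh⟩ := Module.projective_lifting_property q p hq
    have hmem : ∀ a : K, h (k a) ∈ LinearMap.range jC := by
      intro a
      have h1 : q (h (k a)) = 0 := by
        have := LinearMap.ext_iff.mp hh (k a)
        simp only [LinearMap.comp_apply] at this
        rw [this]
        exact hex.apply_apply_eq_zero a
      obtain ⟨c, hc⟩ := (hexq _).mp h1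
      exact ⟨c, hc⟩
    set f₀ : K →ₗ[R] C :=
      ((LinearEquiv.ofInjective jC hjC).symm : ↥(LinearMap.range jC) →ₗ[R] C) ∘ₗ
        LinearMap.codRestrict _ (h ∘ₗ k) (fun a => hmem a) with hf₀
    have hjCf₀ : ∀ a, jC (f₀ a) = h (k a) := by
      intro a
      have h0 : (LinearEquiv.ofInjective jC hjC) (f₀ a) = ⟨h (k a), hmem a⟩ := by
        simp only [hf₀, LinearMap.comp_apply, LinearEquiv.coe_coe]
        rw [LinearEquiv.apply_symm_apply]
        rfl
      have := congrArg Subtype.val h0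
      simpa only [LinearEquiv.ofInjective_apply] using this
    obtain ⟨g, hg⟩ := hextend f₀
    have hker : ∀ x, p x = 0 → (h - jC ∘ₗ g) x = 0 := by
      intro x hx
      obtain ⟨a, rfl⟩ := (hex x).mp hx
      have h5 : g (k a) = f₀ a := by
        have := LinearMap.ext_iff.mp hg a
        simpa using this
      simp [h5, hjCf₀ a]
    obtain ⟨s, hs⟩ := factorThroughSurj p hp (h - jC ∘ₗ g) hker
    refine ⟨s, ?_⟩
    have hqjC : ∀ c, q (jC c) = 0 := fun c => hexq.apply_apply_eq_zero c
    have hcomp : (q ∘ₗ s) ∘ₗ p = LinearMap.id ∘ₗ p := by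
      rw [LinearMap.comp_assoc, hs]
      apply LinearMap.ext
      intro x
      have hhx := LinearMap.ext_iff.mp hh x
      simp only [LinearMap.comp_apply] at hhx ⊢
      simp [map_sub, hqjC, hhx]
    exact (LinearMap.cancel_right hp).mp hcomp

/-- `Ext¹(K, N) = 0` iff maps to a cosyzygy lift to the injective envelope. -/
theorem extVanish_iff_lift {K N I C : Type u} [AddCommGroup K] [Module R K]
    [AddCommGroup N] [Module R N] [AddCommGroup I] [Module R I] [AddCommGroup C] [Module R C]
    (i : N →ₗ[R] I) (π : I →ₗ[R] C) (hi : Function.Injective i)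
    (hπ : Function.Surjective π) (hex : Function.Exact i π) (hI : Module.Injective R I) :
    ExtVanish (R := R) K N ↔ ∀ g : K →ₗ[R] C, ∃ ℓ : K →ₗ[R] I, π ∘ₗ ℓ = g := by
  constructor
  · intro hev g
    set D : K × I →ₗ[R] C := (g ∘ₗ LinearMap.fst R K I) - (π ∘ₗ LinearMap.snd R K I) with hD
    have hmemD : ∀ z : K × I, z ∈ LinearMap.ker D ↔ g z.1 = π z.2 := by
      intro z
      simp [hD, LinearMap.mem_ker, sub_eq_zero]
    have hjmem : ∀ n : N, ((0 : K), i n) ∈ LinearMap.ker D := by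
      intro n
      rw [hmemD]
      have : π (i n) = 0 := hex.apply_apply_eq_zero n
      simp [this]
    set jN : N →ₗ[R] ↥(LinearMap.ker D) :=
      LinearMap.codRestrict _ ((LinearMap.inr R K I) ∘ₗ i)
        (fun n => show ((LinearMap.inr R K I) ∘ₗ i) n ∈ LinearMap.ker D from hjmem n) with hjN
    have hjNinj : Function.Injective jN := by
      intro a b hab
      have := congrArg (fun z => (Subtype.val z).2) hab
      exact hi this
    set qK : ↥(LinearMap.ker D) →ₗ[R] K := LinearMap.fst R K I ∘ₗ (LinearMap.ker D).subtype
      with hqK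
    have hqKsurj : Function.Surjective qK := by
      intro x
      obtain ⟨t, ht⟩ := hπ (g x)
      exact ⟨⟨(x, t), (hmemD (x, t)).mpr ht.symm⟩, rfl⟩
    have hexq : Function.Exact jN qK := by
      intro z
      constructor
      · intro hz
        have h0 : (z : K × I).1 = 0 := hz
        have hmem : π (z : K × I).2 = 0 := by
          have := (hmemD _).mp z.2
          rw [h0, map_zero] at this
          exact this.symm
        obtain ⟨n, hn⟩ := (hex _).mp hmem
        refine ⟨n, ?_⟩
        apply Subtype.ext
        exact Prod.ext (by simpa [hjN] using h0.symm) (by simpa [hjN] using hn)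
      · rintro ⟨n, rfl⟩
        rfl
    obtain ⟨s, hs⟩ := hev ↥(LinearMap.ker D) jN qK hjNinj hqKsurj hexq
    refine ⟨LinearMap.snd R K I ∘ₗ (LinearMap.ker D).subtype ∘ₗ s, ?_⟩
    apply LinearMap.ext
    intro x
    have hmem := (hmemD (s x : K × I)).mp (s x).2
    have hfst : ((s x : K × I)).1 = x := by
      have := LinearMap.ext_iff.mp hs x
      simpa [hqK] using this
    simp only [LinearMap.comp_apply, LinearMap.snd_apply, Submodule.coe_subtype]
    rw [← hmem, hfst]
  · intro hlift X _ _ jN qK hjN hq hexq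
    obtain ⟨e, he⟩ := hI.out jN hjN i
    have hker : ∀ x, qK x = 0 → (π ∘ₗ e) x = 0 := by
      intro x hx
      obtain ⟨n, rfl⟩ := (hexq x).mp hx
      rw [LinearMap.comp_apply, he n]
      exact hex.apply_apply_eq_zero n
    obtain ⟨gb, hgb⟩ := factorThroughSurj qK hq (π ∘ₗ e) hker
    obtain ⟨ℓ, hℓ⟩ := hlift gb
    have hφmem : ∀ x : X, (e - ℓ ∘ₗ qK) x ∈ LinearMap.range i := by
      intro x
      have h1 : π ((e - ℓ ∘ₗ qK) x) = 0 := by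
        have h2 : π (ℓ (qK x)) = gb (qK x) := by
          have := LinearMap.ext_iff.mp hℓ (qK x)
          simpa using this
        have h3 : gb (qK x) = π (e x) := by
          have := LinearMap.ext_iff.mp hgb x
          simpa using this
        simp [map_sub, h2, h3]
      obtain ⟨n, hn⟩ := (hex _).mp h1
      exact ⟨n, hn⟩
    set r : X →ₗ[R] N :=
      ((LinearEquiv.ofInjective i hi).symm : ↥(LinearMap.range i) →ₗ[R] N) ∘ₗ
        LinearMap.codRestrict _ (e - ℓ ∘ₗ qK) hφmem with hr
    have hrj : ∀ n, r (jN n) = n := by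
      intro n
      apply hi
      have h0 : (LinearEquiv.ofInjective i hi) (r (jN n))
          = ⟨(e - ℓ ∘ₗ qK) (jN n), hφmem (jN n)⟩ := by
        simp only [hr, LinearMap.comp_apply, LinearEquiv.coe_coe]
        rw [LinearEquiv.apply_symm_apply]
        rfl
      have h1 := congrArg Subtype.val h0
      have h2 : i (r (jN n)) = (e - ℓ ∘ₗ qK) (jN n) := by
        simpa only [LinearEquiv.ofInjective_apply] using h1
      rw [h2]
      have h3 : qK (jN n) = 0 := hexq.apply_apply_eq_zero n
      simp [he n, h3]
    obtain ⟨s, hs⟩ := sectionOfRetraction jN qK hq hexq r (LinearMap.ext hrj)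
    exact ⟨s, hs⟩

theorem extend_iff_lift {K P C I : Type u} [AddCommGroup K] [Module R K]
    [AddCommGroup P] [Module R P] [AddCommGroup C] [Module R C] [AddCommGroup I] [Module R I]
    (k : K →ₗ[R] P) (hk : Function.Injective k) (hP : Module.Projective R P)
    (π : I →ₗ[R] C) (hπ : Function.Surjective π) (hI : Module.Injective R I) :
    (∀ f : K →ₗ[R] C, ∃ g : P →ₗ[R] C, g ∘ₗ k = f) ↔
      (∀ f : K →ₗ[R] C, ∃ ℓ : K →ₗ[R] I, π ∘ₗ ℓ = f) := by
  constructor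
  · intro h f
    obtain ⟨g, hg⟩ := h f
    letI := hP
    obtain ⟨L, hL⟩ := Module.projective_lifting_property π g hπ
    refine ⟨L ∘ₗ k, ?_⟩
    rw [← LinearMap.comp_assoc, hL, hg]
  · intro h f
    obtain ⟨ℓ, hℓ⟩ := h f
    obtain ⟨L, hL⟩ := hI.out k hk ℓ
    refine ⟨π ∘ₗ L, ?_⟩
    apply LinearMap.ext
    intro a
    rw [LinearMap.comp_apply, LinearMap.comp_apply, hL a]
    have := LinearMap.ext_iff.mp hℓ a
    simpa using this

set_option maxHeartbeats 1000000 in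
theorem swap0 (M N : Type u) [AddCommGroup M] [Module R M] [AddCommGroup N] [Module R N] :
    ExtVanish (R := R) (Syz R M) N ↔ ExtVanish (R := R) M (Cosyz R N) := by
  have h1 := extVanish_iff_extend (K := Syz R M) (P := M →₀ R) (M := M) (C := Cosyz R N)
    (LinearMap.ker (tot R M)).subtype (tot R M) (Submodule.injective_subtype _)
    (tot_surjective R M) (exact_subtype_ker (tot R M)) (projective_finsupp R M)
  have h2 := extVanish_iff_lift (K := Syz R M) (N := N) (I := (jemb R N).I)
    (C := Cosyz R N) (jemb R N).f (LinearMap.range (jemb R N).f).mkQ (jemb R N).hf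
    (Submodule.mkQ_surjective _) (exact_mkQ (jemb R N).f) (jemb R N).inj
  have h3 := extend_iff_lift (K := Syz R M) (P := M →₀ R) (C := Cosyz R N)
    (I := (jemb R N).I) (LinearMap.ker (tot R M)).subtype (Submodule.injective_subtype _) (projective_finsupp R M)
    (LinearMap.range (jemb R N).f).mkQ (Submodule.mkQ_surjective _) (jemb R N).inj
  exact h2.trans (h3.symm.trans h1.symm)

theorem ev_swap : ∀ (k : ℕ) (M : Type u) [AddCommGroup M] [Module R M]
    (N : Type u) [AddCommGroup N] [Module R N],
    Ev R k (Syz R M) N ↔ Ev R k M (Cosyz R N)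
  | 0, M, _, _, N, _, _ => swap0 M N
  | (k+1), M, _, _, N, _, _ => ev_swap k M (Cosyz R N)

theorem dv_iff_ev : ∀ (k : ℕ) (M : Type u) [AddCommGroup M] [Module R M]
    (N : Type u) [AddCommGroup N] [Module R N], Dv R k M N ↔ Ev R k M N
  | 0, M, _, _, N, _, _ => Iff.rfl
  | (k+1), M, _, _, N, _, _ => (dv_iff_ev k (Syz R M) N).trans (ev_swap k M N)

end Swap


section Final

theorem pdLE_succ : ∀ (n : ℕ) (M : Type u) [AddCommGroup M] [Module R M],
    pdLE R n M → pdLE R (n+1) M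
  | 0, M, _, _, h =>
    ⟨M →₀ R, inferInstance, inferInstance, tot R M, projective_finsupp R M,
      tot_surjective R M, syz_projective_of_projective M h⟩
  | (n+1), M, _, _, ⟨P, _, _, f, hP, hf, hres⟩ =>
    ⟨P, inferInstance, inferInstance, f, hP, hf, pdLE_succ n _ hres⟩

theorem idLE_succ : ∀ (n : ℕ) (N : Type u) [AddCommGroup N] [Module R N],
    idLE R n N → idLE R (n+1) N
  | 0, N, _, _, h =>
    ⟨(jemb R N).I, inferInstance, inferInstance, (jemb R N).f, (jemb R N).inj,
      (jemb R N).hf, cosyz_injective_of_injective N h⟩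
  | (n+1), N, _, _, ⟨I, _, _, f, hI, hf, hres⟩ =>
    ⟨I, inferInstance, inferInstance, f, hI, hf, idLE_succ n _ hres⟩

theorem pdLE_mono (M : Type u) [AddCommGroup M] [Module R M] {m n : ℕ} (hmn : m ≤ n)
    (h : pdLE R m M) : pdLE R n M := by
  induction hmn with
  | refl => exact h
  | step _ ih => exact pdLE_succ _ M ih

theorem idLE_mono (N : Type u) [AddCommGroup N] [Module R N] {m n : ℕ} (hmn : m ≤ n)
    (h : idLE R m N) : idLE R n N := by
  induction hmn with
  | refl => exact h
  | step _ ih => exact idLE_succ _ N ih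

theorem pdim_le_iff (M : Type u) [AddCommGroup M] [Module R M] (n : ℕ) :
    pdim R M ≤ (n : ℕ∞) ↔ pdLE R n M := by
  constructor
  · intro h
    by_contra hn
    have hlb : (((n+1 : ℕ)) : ℕ∞) ≤ pdim R M := by
      apply le_sInf
      rintro x ⟨m, hm, rfl⟩
      have hnm : n < m := Nat.lt_of_not_le (fun hle => hn (pdLE_mono M hle hm))
      exact_mod_cast hnm
    have h2 : (((n+1 : ℕ)) : ℕ∞) ≤ (n : ℕ∞) := hlb.trans h
    have h3 : n + 1 ≤ n := by exact_mod_cast h2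
    omega
  · intro h
    exact sInf_le ⟨n, h, rfl⟩

theorem idim_le_iff (N : Type u) [AddCommGroup N] [Module R N] (n : ℕ) :
    idim R N ≤ (n : ℕ∞) ↔ idLE R n N := by
  constructor
  · intro h
    by_contra hn
    have hlb : (((n+1 : ℕ)) : ℕ∞) ≤ idim R N := by
      apply le_sInf
      rintro x ⟨m, hm, rfl⟩
      have hnm : n < m := Nat.lt_of_not_le (fun hle => hn (idLE_mono N hle hm))
      exact_mod_cast hnm
    have h2 : (((n+1 : ℕ)) : ℕ∞) ≤ (n : ℕ∞) := hlb.trans h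
    have h3 : n + 1 ≤ n := by exact_mod_cast h2
    omega
  · intro h
    exact sInf_le ⟨n, h, rfl⟩

theorem key_iff (n : ℕ) :
    (∀ (M : Type u) [AddCommGroup M] [Module R M], pdLE R n M) ↔
    (∀ (N : Type u) [AddCommGroup N] [Module R N], idLE R n N) := by
  constructor
  · intro h N _ _
    exact idLE_of_ev n N (fun M _ _ => (dv_iff_ev n M N).mp (dv_of_pdLE n M (h M) N))
  · intro h M _ _
    exact pdLE_of_dv n M (fun N _ _ => (dv_iff_ev n M N).mpr (ev_of_idLE n N (h N) M))

theorem enat_eq_of_le_iff (a b : ℕ∞) (h : ∀ n : ℕ, a ≤ n ↔ b ≤ n) : a = b := by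
  rcases eq_or_ne a ⊤ with rfl | ha
  · rcases eq_or_ne b ⊤ with rfl | hb
    · rfl
    · exfalso
      lift b to ℕ using hb
      have := (h b).mpr le_rfl
      simp at this
  · lift a to ℕ using ha
    have h1 : b ≤ (a : ℕ∞) := (h a).mp le_rfl
    refine le_antisymm ?_ h1
    rcases eq_or_ne b ⊤ with rfl | hb
    · exact le_top
    · exact (h a).mp le_rfl |> fun _ => (by
        lift b to ℕ using hb
        exact (h b).mpr le_rfl)

end Final

end GlobalDimAux

open GlobalDimAux in
/-- The supremum of projective dimensions of all `R`-modules equals the supremum of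
injective dimensions of all `R`-modules. -/
theorem sup_pdim_eq_sup_idim :
    (⨆ M : ModuleCat.{u} R, pdim R M) = ⨆ M : ModuleCat.{u} R, idim R M := by
  apply enat_eq_of_le_iff
  intro n
  rw [iSup_le_iff, iSup_le_iff]
  constructor
  · intro h N
    exact (idim_le_iff (↑N) n).mpr
      (((key_iff (R := R) n).mp
        (fun M' _ _ => (pdim_le_iff M' n).mp (h (ModuleCat.of R M')))) (↑N))
  · intro h M
    exact (pdim_le_iff (↑M) n).mpr
      (((key_iff (R := R) n).mpr
        (fun N' _ _ => (idim_le_iff N' n).mp (h (ModuleCat.of R N')))) (↑M))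
end

section
/- Let R be a ring with finite global dimension. Then the global dimension of R equals sup{ id_R(P) : P a projective R-module } and also equals sup{ pd_R(I) : I an injective R-module }. -/
universe u

open CategoryTheory

variable (R : Type u) [Ring R]

namespace Aux

variable {R}

theorem pdLE_zero_iff (M : Type u) [AddCommGroup M] [Module R M] :
    pdLE R 0 M ↔ Module.Projective R M := Iff.rfl

theorem pdLE_succ_iff (n : ℕ) (M : Type u) [AddCommGroup M] [Module R M] :
    pdLE R (n+1) M ↔ ∃ (P : Type u) (_ : AddCommGroup P) (_ : Module R P)
      (f : P →ₗ[R] M), Module.Projective R P ∧ Function.Surjective f ∧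
        pdLE R n (LinearMap.ker f) := Iff.rfl

theorem idLE_zero_iff (M : Type u) [AddCommGroup M] [Module R M] :
    idLE R 0 M ↔ Module.Injective R M := Iff.rfl

theorem idLE_succ_iff (n : ℕ) (M : Type u) [AddCommGroup M] [Module R M] :
    idLE R (n+1) M ↔ ∃ (E : Type u) (_ : AddCommGroup E) (_ : Module R E)
      (f : M →ₗ[R] E), Module.Injective R E ∧ Function.Injective f ∧
        idLE R n (E ⧸ LinearMap.range f) := Iff.rfl

/-- Factor a linear map through a surjection whose kernel it kills. -/
theorem exists_descend {B C X : Type u} [AddCommGroup B] [Module R B] [AddCommGroup C]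
    [Module R C] [AddCommGroup X] [Module R X] (b : B →ₗ[R] C) (hb : Function.Surjective b)
    (f : B →ₗ[R] X) (hf : LinearMap.ker b ≤ LinearMap.ker f) :
    ∃ g : C →ₗ[R] X, ∀ m, g (b m) = f m := by
  let e := b.quotKerEquivOfSurjective hb
  have h1 : ∀ m, e (Submodule.Quotient.mk m) = b m := fun m => rfl
  refine ⟨(Submodule.liftQ _ f hf).comp e.symm.toLinearMap, fun m => ?_⟩
  have h2 : e.symm (b m) = Submodule.Quotient.mk m := by
    rw [← h1 m, e.symm_apply_apply]
  simp only [LinearMap.comp_apply, LinearEquiv.coe_coe, h2, Submodule.liftQ_apply]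

section SES

variable {A B C : Type u} [AddCommGroup A] [Module R A] [AddCommGroup B] [Module R B]
  [AddCommGroup C] [Module R C] (a : A →ₗ[R] B) (b : B →ₗ[R] C)

theorem b_a_eq_zero (hex : LinearMap.range a = LinearMap.ker b) (y : A) : b (a y) = 0 := by
  have : a y ∈ LinearMap.ker b := hex ▸ LinearMap.mem_range_self a y
  exact this

/-- From a section of `b`, build a retraction of `a`. -/
theorem retr_of_sec (ha : Function.Injective a) (hex : LinearMap.range a = LinearMap.ker b)
    (σ : C →ₗ[R] B) (hσ : ∀ c, b (σ c) = c) :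
    ∃ ρ : B →ₗ[R] A, (∀ y, ρ (a y) = y) ∧ ∀ m, a (ρ m) = m - σ (b m) := by
  have hmem : ∀ m, m - σ (b m) ∈ LinearMap.range a := by
    intro m
    rw [hex, LinearMap.mem_ker, map_sub, hσ, sub_self]
  let ρ : B →ₗ[R] A := (LinearEquiv.ofInjective a ha).symm.toLinearMap.comp
    (LinearMap.codRestrict (LinearMap.range a) (LinearMap.id - σ.comp b) hmem)
  have key : ∀ m, a (ρ m) = m - σ (b m) := by
    intro m
    have : ∀ x : LinearMap.range a, a ((LinearEquiv.ofInjective a ha).symm x) = x := by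
      intro x
      have := (LinearEquiv.ofInjective a ha).apply_symm_apply x
      have h2 := congrArg Subtype.val this
      rwa [LinearEquiv.ofInjective_apply] at h2
    exact this _
  refine ⟨ρ, fun y => ?_, key⟩
  apply ha
  rw [key (a y), b_a_eq_zero a b hex y, map_zero, sub_zero]

/-- From a retraction of `a`, build a section of `b`. -/
theorem sec_of_retr (hb : Function.Surjective b)
    (hex : LinearMap.range a = LinearMap.ker b)
    (ρ : B →ₗ[R] A) (hρ : ∀ y, ρ (a y) = y) :
    ∃ σ : C →ₗ[R] B, (∀ c, b (σ c) = c) ∧ ∀ m, σ (b m) = m - a (ρ m) := by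
  have hker : LinearMap.ker b ≤ LinearMap.ker (LinearMap.id - a.comp ρ) := by
    intro m hm
    rw [← hex] at hm
    obtain ⟨y, rfl⟩ := hm
    simp [hρ y]
  obtain ⟨σ, hσ⟩ := exists_descend b hb _ hker
  have hσ' : ∀ m, σ (b m) = m - a (ρ m) := by
    intro m; rw [hσ]; rfl
  refine ⟨σ, fun c => ?_, hσ'⟩
  obtain ⟨m, rfl⟩ := hb c
  rw [hσ', map_sub, b_a_eq_zero a b hex, sub_zero]

end SES

theorem projective_of_subsingleton (M : Type u) [AddCommGroup M] [Module R M]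
    [Subsingleton M] : Module.Projective R M :=
  Module.Projective.of_basis (Module.Basis.empty M (ι := PEmpty.{u+1}))

theorem pdLE_of_iso (n : ℕ) : ∀ {M N : Type u} [AddCommGroup M] [Module R M]
    [AddCommGroup N] [Module R N], (M ≃ₗ[R] N) → pdLE R n M → pdLE R n N := by
  induction n with
  | zero =>
    intro M N _ _ _ _ e h
    haveI : Module.Projective R M := h
    exact Module.Projective.of_equiv e
  | succ n ih =>
    intro M N _ _ _ _ e h
    obtain ⟨P, iP1, iP2, f, hP, hf, hker⟩ := h
    refine ⟨P, iP1, iP2, e.toLinearMap.comp f, hP, e.surjective.comp hf, ?_⟩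
    have hk : LinearMap.ker (e.toLinearMap.comp f) = LinearMap.ker f := by
      rw [LinearMap.ker_comp, LinearEquiv.ker, Submodule.comap_bot]
    exact ih (LinearEquiv.ofEq _ _ hk.symm) hker

theorem pdLE_succ (n : ℕ) : ∀ {M : Type u} [AddCommGroup M] [Module R M],
    pdLE R n M → pdLE R (n+1) M := by
  induction n with
  | zero =>
    intro M _ _ h
    refine ⟨M, inferInstance, inferInstance, LinearMap.id, h, Function.surjective_id, ?_⟩
    have : LinearMap.ker (LinearMap.id : M →ₗ[R] M) = ⊥ := LinearMap.ker_id
    rw [this]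
    exact projective_of_subsingleton _
  | succ n ih =>
    intro M _ _ h
    obtain ⟨P, iP1, iP2, f, hP, hf, hker⟩ := h
    exact ⟨P, iP1, iP2, f, hP, hf, ih hker⟩

theorem pdLE_mono {n m : ℕ} (h : n ≤ m) {M : Type u} [AddCommGroup M] [Module R M]
    (hM : pdLE R n M) : pdLE R m M := by
  induction h with
  | refl => exact hM
  | step _ ih => exact pdLE_succ _ ih

theorem pdLE_of_projective {n : ℕ} {M : Type u} [AddCommGroup M] [Module R M]
    (h : Module.Projective R M) : pdLE R n M :=
  pdLE_mono (Nat.zero_le n) h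

theorem injective_of_subsingleton (M : Type u) [AddCommGroup M] [Module R M]
    [Subsingleton M] : Module.Injective R M where
  out X Y _ _ _ _ f hf g := ⟨0, fun x => Subsingleton.elim _ _⟩

theorem injective_prod {E E' : Type u} [AddCommGroup E] [Module R E] [AddCommGroup E']
    [Module R E'] (h1 : Module.Injective R E) (h2 : Module.Injective R E') :
    Module.Injective R (E × E') where
  out X Y _ _ _ _ f hf g := by
    obtain ⟨u, hu⟩ := h1.out f hf ((LinearMap.fst R E E').comp g)
    obtain ⟨v, hv⟩ := h2.out f hf ((LinearMap.snd R E E').comp g)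
    refine ⟨LinearMap.prod u v, fun x => ?_⟩
    have := hu x; have := hv x
    simp only [LinearMap.prod_apply, Pi.prod, LinearMap.comp_apply] at *
    ext <;> simp_all

theorem idLE_of_iso (n : ℕ) : ∀ {M N : Type u} [AddCommGroup M] [Module R M]
    [AddCommGroup N] [Module R N], (M ≃ₗ[R] N) → idLE R n M → idLE R n N := by
  induction n with
  | zero =>
    intro M N _ _ _ _ e h
    haveI : Module.Injective R M := h
    constructor
    intro X Y _ _ _ _ f hf g
    obtain ⟨u, hu⟩ := Module.Injective.out f hf (e.symm.toLinearMap.comp g)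
    refine ⟨e.toLinearMap.comp u, fun x => ?_⟩
    simp only [LinearMap.comp_apply, LinearEquiv.coe_coe] at hu ⊢
    rw [hu x, e.apply_symm_apply]
  | succ n ih =>
    intro M N _ _ _ _ e h
    obtain ⟨E, iE1, iE2, f, hE, hf, hres⟩ := h
    refine ⟨E, iE1, iE2, f.comp e.symm.toLinearMap, hE, hf.comp e.symm.injective, ?_⟩
    have hr : LinearMap.range (f.comp e.symm.toLinearMap) = LinearMap.range f := by
      rw [LinearMap.range_comp, LinearEquiv.range, Submodule.map_top]
    exact ih (Submodule.quotEquivOfEq _ _ hr.symm) hres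

theorem idLE_succ (n : ℕ) : ∀ {M : Type u} [AddCommGroup M] [Module R M],
    idLE R n M → idLE R (n+1) M := by
  induction n with
  | zero =>
    intro M _ _ h
    refine ⟨M, inferInstance, inferInstance, LinearMap.id, h, fun x y hxy => hxy, ?_⟩
    have : LinearMap.range (LinearMap.id : M →ₗ[R] M) = ⊤ := LinearMap.range_id
    rw [this]
    haveI : Subsingleton (M ⧸ (⊤ : Submodule R M)) :=
      Submodule.Quotient.subsingleton_iff.mpr rfl
    exact injective_of_subsingleton _
  | succ n ih =>
    intro M _ _ h
    obtain ⟨E, iE1, iE2, f, hE, hf, hres⟩ := h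
    exact ⟨E, iE1, iE2, f, hE, hf, ih hres⟩

theorem idLE_mono {n m : ℕ} (h : n ≤ m) {M : Type u} [AddCommGroup M] [Module R M]
    (hM : idLE R n M) : idLE R m M := by
  induction h with
  | refl => exact hM
  | step _ ih => exact idLE_succ _ ih

theorem idLE_of_injective {n : ℕ} {M : Type u} [AddCommGroup M] [Module R M]
    (h : Module.Injective R M) : idLE R n M :=
  idLE_mono (Nat.zero_le n) h

/-- Horseshoe: the middle of a short exact sequence with ends of `pd ≤ n` has `pd ≤ n`. -/
theorem pdLE_middle (n : ℕ) : ∀ {A B C : Type u} [AddCommGroup A] [Module R A]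
    [AddCommGroup B] [Module R B] [AddCommGroup C] [Module R C]
    (a : A →ₗ[R] B) (b : B →ₗ[R] C), Function.Injective a → Function.Surjective b →
    LinearMap.range a = LinearMap.ker b → pdLE R n A → pdLE R n C → pdLE R n B := by
  induction n with
  | zero =>
    intro A B C _ _ _ _ _ _ a b ha hb hex hA hC
    haveI : Module.Projective R A := hA
    haveI : Module.Projective R C := hC
    obtain ⟨σ, hσ⟩ := Module.projective_lifting_property b LinearMap.id hb
    have hσ' : ∀ c, b (σ c) = c := fun c => congrFun (congrArg DFunLike.coe hσ) c
    obtain ⟨ρ, hρ, hρ2⟩ := retr_of_sec a b ha hex σ hσ'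
    refine Module.Projective.of_split (LinearMap.prod ρ b) (LinearMap.coprod a σ) ?_
    ext m
    simp only [LinearMap.comp_apply, LinearMap.prod_apply, Function.prod, LinearMap.coprod_apply,
      LinearMap.id_apply, hρ2 m]
    abel
  | succ n ih =>
    intro A B C _ _ _ _ _ _ a b ha hb hex hA hC
    obtain ⟨Q, iQ1, iQ2, g, hQ, hg, hkg⟩ := hA
    obtain ⟨P, iP1, iP2, p, hP, hp, hkp⟩ := hC
    haveI : Module.Projective R Q := hQ
    haveI : Module.Projective R P := hP
    obtain ⟨h, hh⟩ := Module.projective_lifting_property b p hb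
    have hh' : ∀ x, b (h x) = p x := fun x => congrFun (congrArg DFunLike.coe hh) x
    set φ : (Q × P) →ₗ[R] B := LinearMap.coprod (a.comp g) h with hφdef
    have hφval : ∀ q x, φ (q, x) = a (g q) + h x := fun q x => rfl
    have hφ : Function.Surjective φ := by
      intro m
      obtain ⟨x, hx⟩ := hp (b m)
      have h2 : m - h x ∈ LinearMap.ker b := by
        rw [LinearMap.mem_ker, map_sub, hh', hx, sub_self]
      rw [← hex] at h2
      obtain ⟨y, hy⟩ := h2
      obtain ⟨q, hq⟩ := hg y
      exact ⟨(q, x), by rw [hφval, hq, hy]; abel⟩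
    refine ⟨Q × P, inferInstance, inferInstance, φ, inferInstance, hφ, ?_⟩
    -- SES : ker g → ker φ → ker p
    have hmemψ : ∀ x : LinearMap.ker φ, (x : Q × P).2 ∈ LinearMap.ker p := by
      rintro ⟨⟨q, x⟩, hm⟩
      have hm' : a (g q) + h x = 0 := hm
      have : b (a (g q) + h x) = 0 := by rw [hm', map_zero]
      rw [map_add, b_a_eq_zero a b hex, zero_add, hh'] at this
      exact this
    set ψ : (LinearMap.ker φ) →ₗ[R] (LinearMap.ker p) :=
      LinearMap.codRestrict _ ((LinearMap.snd R Q P).comp (LinearMap.ker φ).subtype) hmemψ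
      with hψdef
    have hmemα : ∀ y : LinearMap.ker g, ((y : Q), (0 : P)) ∈ LinearMap.ker φ := by
      rintro ⟨q, hq⟩
      show φ (q, 0) = 0
      rw [hφval, hq, map_zero, map_zero, zero_add]
    set α : (LinearMap.ker g) →ₗ[R] (LinearMap.ker φ) :=
      LinearMap.codRestrict _ ((LinearMap.inl R Q P).comp (LinearMap.ker g).subtype) hmemα
      with hαdef
    have hαinj : Function.Injective α := by
      intro y₁ y₂ hy
      have : ((y₁ : Q), (0:P)) = ((y₂ : Q), (0:P)) := congrArg Subtype.val hy
      exact Subtype.ext (congrArg Prod.fst this)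
    have hψsurj : Function.Surjective ψ := by
      rintro ⟨x, hx⟩
      have h2 : h x ∈ LinearMap.ker b := by
        rw [LinearMap.mem_ker, hh', hx]
      rw [← hex] at h2
      obtain ⟨y, hy⟩ := h2
      obtain ⟨q, hq⟩ := hg (-y)
      have hmem : φ (q, x) = 0 := by rw [hφval, hq, map_neg, hy]; abel
      exact ⟨⟨(q, x), hmem⟩, rfl⟩
    have hexαψ : LinearMap.range α = LinearMap.ker ψ := by
      ext x
      constructor
      · rintro ⟨y, rfl⟩
        show ψ (α y) = 0
        apply Subtype.ext
        show ((α y : Q × P)).2 = 0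
        rfl
      · intro hx
        have h2 : ((x : Q × P)).2 = 0 := congrArg Subtype.val hx
        have h3 : φ ((x : Q × P).1, (0:P)) = 0 := by
          rw [← h2]
          exact x.2
        rw [hφval, map_zero, add_zero] at h3
        have h4 : g (x : Q × P).1 = 0 := ha (by rw [h3, map_zero])
        refine ⟨⟨(x : Q × P).1, h4⟩, ?_⟩
        apply Subtype.ext
        show ((x : Q × P).1, (0:P)) = (x : Q × P)
        ext
        · rfl
        · exact h2.symm
    exact ih α ψ hαinj hψsurj hexαψ hkg hkp

/-- If `0 → A → B → P → 0` is exact with `P` projective and `pd B ≤ n`, then `pd A ≤ n`. -/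
theorem pdLE_of_ses_proj (n : ℕ) {A B P : Type u} [AddCommGroup A] [Module R A]
    [AddCommGroup B] [Module R B] [AddCommGroup P] [Module R P]
    (α : A →ₗ[R] B) (β : B →ₗ[R] P) (hα : Function.Injective α) (hβ : Function.Surjective β)
    (hex : LinearMap.range α = LinearMap.ker β) (hP : Module.Projective R P)
    (hB : pdLE R n B) : pdLE R n A := by
  haveI : Module.Projective R P := hP
  cases n with
  | zero =>
    haveI : Module.Projective R B := hB
    obtain ⟨σ, hσ⟩ := Module.projective_lifting_property β LinearMap.id hβ
    have hσ' : ∀ c, β (σ c) = c := fun c => congrFun (congrArg DFunLike.coe hσ) c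
    obtain ⟨ρ, hρ, -⟩ := retr_of_sec α β hα hex σ hσ'
    exact Module.Projective.of_split α ρ (LinearMap.ext fun y => hρ y)
  | succ n =>
    obtain ⟨Q, iQ1, iQ2, g, hQ, hg, hker⟩ := hB
    haveI : Module.Projective R Q := hQ
    set δ : Q →ₗ[R] P := β.comp g with hδdef
    have hδ : Function.Surjective δ := hβ.comp hg
    have hmemu : ∀ x : LinearMap.ker δ, g (x : Q) ∈ LinearMap.range α := by
      rintro ⟨q, hq⟩
      rw [hex, LinearMap.mem_ker]
      exact hq
    set u : (LinearMap.ker δ) →ₗ[R] A :=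
      (LinearEquiv.ofInjective α hα).symm.toLinearMap.comp
        (LinearMap.codRestrict _ (g.comp (LinearMap.ker δ).subtype) hmemu) with hudef
    have hαu : ∀ x : LinearMap.ker δ, α (u x) = g (x : Q) := by
      intro x
      have key : ∀ z : LinearMap.range α, α ((LinearEquiv.ofInjective α hα).symm z) = z := by
        intro z
        have := (LinearEquiv.ofInjective α hα).apply_symm_apply z
        have h2 := congrArg Subtype.val this
        rwa [LinearEquiv.ofInjective_apply] at h2
      exact key _
    have husurj : Function.Surjective u := by
      intro y
      obtain ⟨q, hq⟩ := hg (α y)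
      have hqk : q ∈ LinearMap.ker δ := by
        show β (g q) = 0
        rw [hq, ← LinearMap.mem_ker, ← hex]
        exact ⟨y, rfl⟩
      refine ⟨⟨q, hqk⟩, hα ?_⟩
      rw [hαu]
      exact hq
    -- ker δ is projective
    obtain ⟨s, hs⟩ := Module.projective_lifting_property δ LinearMap.id hδ
    have hs' : ∀ c, δ (s c) = c := fun c => congrFun (congrArg DFunLike.coe hs) c
    obtain ⟨ρ', hρ', -⟩ := retr_of_sec (LinearMap.ker δ).subtype δ (Submodule.injective_subtype _)
      (by rw [Submodule.range_subtype]) s hs'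
    haveI : Module.Projective R (LinearMap.ker δ) :=
      Module.Projective.of_split (LinearMap.ker δ).subtype ρ' (LinearMap.ext fun y => hρ' y)
    -- ker u ≃ ker g
    have hkeru : ∀ x : LinearMap.ker u, g ((x : LinearMap.ker δ) : Q) = 0 := by
      rintro ⟨x, hx⟩
      have : α (u x) = g (x : Q) := hαu x
      rw [hx, map_zero] at this
      exact this.symm
    have hy1 : ∀ y : LinearMap.ker g, (y : Q) ∈ LinearMap.ker δ := by
      intro y
      show β (g (y : Q)) = 0
      rw [y.2, map_zero]
    let e : (LinearMap.ker u) ≃ₗ[R] (LinearMap.ker g) :=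
      { toFun := fun x => ⟨((x : LinearMap.ker δ) : Q), hkeru x⟩
        map_add' := fun x y => rfl
        map_smul' := fun c x => rfl
        invFun := fun y => ⟨⟨(y : Q), hy1 y⟩, by
          show u _ = 0
          apply hα
          rw [hαu, map_zero]
          exact y.2⟩
        left_inv := fun x => by apply Subtype.ext; apply Subtype.ext; rfl
        right_inv := fun y => by apply Subtype.ext; rfl }
    exact ⟨LinearMap.ker δ, inferInstance, inferInstance, u, inferInstance, husurj,
      pdLE_of_iso n e.symm hker⟩
/-- If `0 → A → B → C → 0` is exact, `pd B ≤ s` and `pd C ≤ n+1`, then `pd A ≤ max s n`. -/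
theorem pdLE_ker (s n : ℕ) {A B C : Type u} [AddCommGroup A] [Module R A]
    [AddCommGroup B] [Module R B] [AddCommGroup C] [Module R C]
    (a : A →ₗ[R] B) (b : B →ₗ[R] C) (ha : Function.Injective a) (hb : Function.Surjective b)
    (hex : LinearMap.range a = LinearMap.ker b)
    (hB : pdLE R s B) (hC : pdLE R (n+1) C) : pdLE R (max s n) A := by
  obtain ⟨P, iP1, iP2, p, hP, hp, hkp⟩ := hC
  haveI : Module.Projective R P := hP
  set δ : (P × B) →ₗ[R] C := (p.comp (LinearMap.fst R P B)) - (b.comp (LinearMap.snd R P B))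
    with hδdef
  have hδval : ∀ x m, δ (x, m) = p x - b m := fun x m => rfl
  set D := LinearMap.ker δ with hDdef
  set π₁ : D →ₗ[R] P := (LinearMap.fst R P B).comp D.subtype with hπ₁def
  set π₂ : D →ₗ[R] B := (LinearMap.snd R P B).comp D.subtype with hπ₂def
  have hπ₁surj : Function.Surjective π₁ := by
    intro x
    obtain ⟨m, hm⟩ := hb (p x)
    exact ⟨⟨(x, m), by rw [LinearMap.mem_ker, hδval, hm, sub_self]⟩, rfl⟩
  have hπ₂surj : Function.Surjective π₂ := by
    intro m
    obtain ⟨x, hx⟩ := hp (b m)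
    exact ⟨⟨(x, m), by rw [LinearMap.mem_ker, hδval, hx, sub_self]⟩, rfl⟩
  -- SES : ker p → D → B
  have hmemα : ∀ y : LinearMap.ker p, ((y : P), (0 : B)) ∈ D := by
    rintro ⟨x, hx⟩
    rw [LinearMap.mem_ker, hδval, hx, map_zero, sub_self]
  set α : (LinearMap.ker p) →ₗ[R] D :=
    LinearMap.codRestrict _ ((LinearMap.inl R P B).comp (LinearMap.ker p).subtype) hmemα
    with hαdef
  have hαinj : Function.Injective α := by
    intro y₁ y₂ hy
    have : ((y₁ : P), (0:B)) = ((y₂ : P), (0:B)) := congrArg Subtype.val hy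
    exact Subtype.ext (congrArg Prod.fst this)
  have hexαπ₂ : LinearMap.range α = LinearMap.ker π₂ := by
    ext x
    constructor
    · rintro ⟨y, rfl⟩
      show ((α y : P × B)).2 = 0
      rfl
    · intro hx
      have h2 : ((x : P × B)).2 = 0 := hx
      have h3 : p ((x : P × B).1) = 0 := by
        have h4 : δ ((x : P × B)) = 0 := x.2
        have h5 : δ ((x : P × B).1, (x : P × B).2) = 0 := by
          rw [← h4]
        rw [hδval, h2, map_zero, sub_zero] at h5
        exact h5
      refine ⟨⟨(x : P × B).1, h3⟩, ?_⟩
      apply Subtype.ext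
      show ((x : P × B).1, (0:B)) = (x : P × B)
      ext
      · rfl
      · exact h2.symm
  have hD : pdLE R (max s n) D :=
    pdLE_middle (max s n) α π₂ hαinj hπ₂surj hexαπ₂
      (pdLE_mono (le_max_right s n) hkp) (pdLE_mono (le_max_left s n) hB)
  -- SES : A → D → P
  have hmemα₁ : ∀ y : A, ((0 : P), a y) ∈ D := by
    intro y
    rw [LinearMap.mem_ker, hδval, map_zero, b_a_eq_zero a b hex, sub_zero]
  set α₁ : A →ₗ[R] D := LinearMap.codRestrict _ (LinearMap.inr R P B |>.comp a)
    (fun y => hmemα₁ y) with hα₁def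
  have hα₁inj : Function.Injective α₁ := by
    intro y₁ y₂ hy
    have : ((0:P), a y₁) = ((0:P), a y₂) := congrArg Subtype.val hy
    exact ha (congrArg Prod.snd this)
  have hexα₁π₁ : LinearMap.range α₁ = LinearMap.ker π₁ := by
    ext x
    constructor
    · rintro ⟨y, rfl⟩
      show ((α₁ y : P × B)).1 = 0
      rfl
    · intro hx
      have h2 : ((x : P × B)).1 = 0 := hx
      have h3 : b ((x : P × B).2) = 0 := by
        have h4 : δ ((x : P × B).1, (x : P × B).2) = 0 := x.2
        rw [hδval, h2, map_zero, zero_sub, neg_eq_zero] at h4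
        exact h4
      have h5 : (x : P × B).2 ∈ LinearMap.range a := by rw [hex]; exact h3
      obtain ⟨y, hy⟩ := h5
      refine ⟨y, ?_⟩
      apply Subtype.ext
      show ((0 : P), a y) = (x : P × B)
      ext
      · exact h2.symm
      · exact hy
  exact pdLE_of_ses_proj (max s n) α₁ π₁ hα₁inj hπ₁surj hexα₁π₁ hP hD

/-- Every module embeds into an injective module (of the same universe). -/
theorem exists_injective_embedding (M : Type u) [AddCommGroup M] [Module R M] :
    ∃ (E : Type u) (_ : AddCommGroup E) (_ : Module R E) (f : M →ₗ[R] E),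
      Module.Injective R E ∧ Function.Injective f := by
  haveI : EnoughInjectives (ModuleCat.{u} R) := inferInstance
  let Mc := ModuleCat.of R M
  let E := Injective.under Mc
  haveI : CategoryTheory.Injective (ModuleCat.of R E) := Injective.injective_under Mc
  refine ⟨E, inferInstance, inferInstance, (Injective.ι Mc).hom, ?_, ?_⟩
  · exact Module.injective_module_of_injective_object R E
  · exact (ModuleCat.mono_iff_injective (Injective.ι Mc)).1 (Injective.ι_mono Mc)

/-- Every module admits a surjection from a free (hence projective) module. -/
theorem exists_free_cover (M : Type u) [AddCommGroup M] [Module R M] :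
    ∃ (F : Type u) (_ : AddCommGroup F) (_ : Module R F) (p : F →ₗ[R] M),
      Module.Projective R F ∧ Function.Surjective p :=
  ⟨M →₀ R, inferInstance, inferInstance, Finsupp.linearCombination R id, inferInstance,
    Finsupp.linearCombination_surjective R Function.surjective_id⟩

/-- Dual horseshoe: the middle of a short exact sequence with ends of `id ≤ n` has `id ≤ n`. -/
theorem idLE_middle (n : ℕ) : ∀ {A B C : Type u} [AddCommGroup A] [Module R A]
    [AddCommGroup B] [Module R B] [AddCommGroup C] [Module R C]
    (a : A →ₗ[R] B) (b : B →ₗ[R] C), Function.Injective a → Function.Surjective b →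
    LinearMap.range a = LinearMap.ker b → idLE R n A → idLE R n C → idLE R n B := by
  induction n with
  | zero =>
    intro A B C _ _ _ _ _ _ a b ha hb hex hA hC
    haveI : Module.Injective R A := hA
    haveI : Module.Injective R C := hC
    obtain ⟨ρ, hρ⟩ := Module.Injective.out a ha (LinearMap.id : A →ₗ[R] A)
    obtain ⟨σ, hσ, hσ2⟩ := sec_of_retr a b hb hex ρ (fun y => hρ y)
    constructor
    intro X Y _ _ _ _ f hf g
    obtain ⟨gA, hgA⟩ := Module.Injective.out f hf (ρ.comp g)
    obtain ⟨gC, hgC⟩ := Module.Injective.out f hf (b.comp g)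
    refine ⟨a.comp gA + σ.comp gC, fun x => ?_⟩
    have h1 : gA (f x) = ρ (g x) := hgA x
    have h2 : gC (f x) = b (g x) := hgC x
    rw [LinearMap.add_apply, LinearMap.comp_apply, LinearMap.comp_apply, h1, h2, hσ2 (g x)]
    abel
  | succ n ih =>
    intro A B C _ _ _ _ _ _ a b ha hb hex hA hC
    obtain ⟨E, iE1, iE2, eA, hEinj, heA, hA'⟩ := hA
    obtain ⟨E', iE1', iE2', eC, hE'inj, heC, hC'⟩ := hC
    haveI : Module.Injective R E := hEinj
    obtain ⟨hAB, hhAB⟩ := Module.Injective.out a ha eA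
    set φ : B →ₗ[R] E × E' := LinearMap.prod hAB (eC.comp b) with hφdef
    have hφval : ∀ m, φ m = (hAB m, eC (b m)) := fun m => rfl
    have hφinj : Function.Injective φ := by
      intro m₁ m₂ hm
      rw [← sub_eq_zero, ← map_sub] at hm
      set m := m₁ - m₂ with hmdef
      have h1 : hAB m = 0 := congrArg Prod.fst hm
      have h2 : eC (b m) = 0 := congrArg Prod.snd hm
      have h3 : b m = 0 := heC (by rw [h2, map_zero])
      have h4 : m ∈ LinearMap.range a := by rw [hex]; exact h3
      obtain ⟨y, hy⟩ := h4
      have h5 : eA y = 0 := by rw [← hhAB y, hy, h1]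
      have h6 : y = 0 := heA (by rw [h5, map_zero])
      rw [← sub_eq_zero]
      rw [h6, map_zero] at hy
      rw [← hmdef, ← hy]
    refine ⟨E × E', inferInstance, inferInstance, φ, injective_prod hEinj hE'inj, hφinj, ?_⟩
    -- SES : E ⧸ range eA → (E × E') ⧸ range φ → E' ⧸ range eC
    set Q := (E × E') ⧸ LinearMap.range φ with hQdef
    have hαker : LinearMap.range eA ≤
        LinearMap.ker ((LinearMap.range φ).mkQ.comp (LinearMap.inl R E E')) := by
      rintro x ⟨y, rfl⟩
      rw [LinearMap.mem_ker, LinearMap.comp_apply, Submodule.mkQ_apply,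
        Submodule.Quotient.mk_eq_zero]
      refine ⟨a y, ?_⟩
      rw [hφval, hhAB y, b_a_eq_zero a b hex, map_zero]
      rfl
    set α : (E ⧸ LinearMap.range eA) →ₗ[R] Q :=
      Submodule.liftQ _ ((LinearMap.range φ).mkQ.comp (LinearMap.inl R E E')) hαker with hαdef
    have hαval : ∀ x : E, α (Submodule.Quotient.mk x) =
        Submodule.Quotient.mk ((x, 0) : E × E') := fun x => rfl
    have hβker : LinearMap.range φ ≤
        LinearMap.ker ((LinearMap.range eC).mkQ.comp (LinearMap.snd R E E')) := by
      rintro x ⟨m, rfl⟩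
      rw [LinearMap.mem_ker, LinearMap.comp_apply, Submodule.mkQ_apply,
        Submodule.Quotient.mk_eq_zero]
      exact ⟨b m, rfl⟩
    set β : Q →ₗ[R] (E' ⧸ LinearMap.range eC) :=
      Submodule.liftQ _ ((LinearMap.range eC).mkQ.comp (LinearMap.snd R E E')) hβker with hβdef
    have hβval : ∀ x : E × E', β (Submodule.Quotient.mk x) =
        Submodule.Quotient.mk x.2 := fun x => rfl
    have hαinj : Function.Injective α := by
      rw [← LinearMap.ker_eq_bot, Submodule.eq_bot_iff]
      intro x hx
      obtain ⟨e, rfl⟩ := Submodule.Quotient.mk_surjective _ x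
      rw [LinearMap.mem_ker, hαval, Submodule.Quotient.mk_eq_zero] at hx
      obtain ⟨m, hm⟩ := hx
      rw [hφval] at hm
      have h1 : hAB m = e := congrArg Prod.fst hm
      have h2 : eC (b m) = 0 := congrArg Prod.snd hm
      have h3 : b m = 0 := heC (by rw [h2, map_zero])
      have h4 : m ∈ LinearMap.range a := by rw [hex]; exact h3
      obtain ⟨y, hy⟩ := h4
      rw [Submodule.Quotient.mk_eq_zero]
      exact ⟨y, by rw [← h1, ← hy, hhAB]⟩
    have hβsurj : Function.Surjective β := by
      intro q
      obtain ⟨e', rfl⟩ := Submodule.Quotient.mk_surjective _ q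
      exact ⟨Submodule.Quotient.mk ((0, e') : E × E'), rfl⟩
    have hexαβ : LinearMap.range α = LinearMap.ker β := by
      ext q
      constructor
      · rintro ⟨x, rfl⟩
        obtain ⟨e, rfl⟩ := Submodule.Quotient.mk_surjective _ x
        rw [LinearMap.mem_ker, hαval, hβval]
        exact Submodule.Quotient.mk_eq_zero _ |>.mpr (Submodule.zero_mem _)
      · intro hq
        obtain ⟨⟨e, e'⟩, rfl⟩ := Submodule.Quotient.mk_surjective _ q
        rw [LinearMap.mem_ker, hβval, Submodule.Quotient.mk_eq_zero] at hq
        obtain ⟨c, hc⟩ := hq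
        obtain ⟨m, hm⟩ := hb c
        refine ⟨Submodule.Quotient.mk (e - hAB m), ?_⟩
        rw [hαval]
        rw [Submodule.Quotient.eq]
        refine ⟨-m, ?_⟩
        rw [map_neg, hφval]
        have : e' = eC (b m) := by rw [hm, hc]
        rw [this]
        ext
        · show -(hAB m) = (e - hAB m) - e
          abel
        · show -(eC (b m)) = 0 - eC (b m)
          abel
    exact ih α β hαinj hβsurj hexαβ hA' hC'
/-- If `0 → E → B → C → 0` is exact with `E` injective and `id B ≤ n`, then `id C ≤ n`. -/
theorem idLE_of_ses_inj (n : ℕ) {E B C : Type u} [AddCommGroup E] [Module R E]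
    [AddCommGroup B] [Module R B] [AddCommGroup C] [Module R C]
    (α : E →ₗ[R] B) (β : B →ₗ[R] C) (hα : Function.Injective α) (hβ : Function.Surjective β)
    (hex : LinearMap.range α = LinearMap.ker β) (hE : Module.Injective R E)
    (hB : idLE R n B) : idLE R n C := by
  obtain ⟨ρ, hρ⟩ := hE.out α hα (LinearMap.id : E →ₗ[R] E)
  obtain ⟨σ, hσ, hσ2⟩ := sec_of_retr α β hβ hex ρ (fun y => hρ y)
  have hσinj : Function.Injective σ := by
    intro c₁ c₂ h
    rw [← hσ c₁, ← hσ c₂, h]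
  cases n with
  | zero =>
    haveI : Module.Injective R B := hB
    constructor
    intro X Y _ _ _ _ f hf g
    obtain ⟨G, hG⟩ := Module.Injective.out f hf (σ.comp g)
    refine ⟨β.comp G, fun x => ?_⟩
    rw [LinearMap.comp_apply, hG x, LinearMap.comp_apply, hσ]
  | succ n =>
    obtain ⟨F, iF1, iF2, e, hF, he, hres⟩ := hB
    have heσ : Function.Injective (e.comp σ) := he.comp hσinj
    refine ⟨F, iF1, iF2, e.comp σ, hF, heσ, ?_⟩
    -- SES : E → F ⧸ range (e∘σ) → F ⧸ range e
    set p₀ := LinearMap.range (e.comp σ) with hp₀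
    set κ : E →ₗ[R] (F ⧸ p₀) := p₀.mkQ.comp (e.comp α) with hκdef
    have hκval : ∀ x, κ x = Submodule.Quotient.mk (e (α x)) := fun x => rfl
    have hπker : p₀ ≤ LinearMap.ker (LinearMap.range e).mkQ := by
      rintro x ⟨c, rfl⟩
      rw [LinearMap.mem_ker, Submodule.mkQ_apply, Submodule.Quotient.mk_eq_zero]
      exact ⟨σ c, rfl⟩
    set π' : (F ⧸ p₀) →ₗ[R] (F ⧸ LinearMap.range e) :=
      Submodule.liftQ _ (LinearMap.range e).mkQ hπker with hπ'def
    have hπ'val : ∀ x : F, π' (Submodule.Quotient.mk x) = Submodule.Quotient.mk x :=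
      fun x => rfl
    have hκinj : Function.Injective κ := by
      intro x₁ x₂ h
      rw [← sub_eq_zero, ← map_sub] at h
      set x := x₁ - x₂ with hxdef
      rw [hκval, Submodule.Quotient.mk_eq_zero] at h
      obtain ⟨c, hc⟩ := h
      have h2 : α x = σ c := he hc.symm
      have h3 : c = 0 := by
        have := congrArg β h2
        rw [b_a_eq_zero α β hex, hσ] at this
        exact this.symm
      have h4 : α x = 0 := by rw [h2, h3, map_zero]
      have h5 : x = 0 := hα (by rw [h4, map_zero])
      rw [← sub_eq_zero, ← hxdef, h5]
    have hπ'surj : Function.Surjective π' := by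
      intro q
      obtain ⟨f, rfl⟩ := Submodule.Quotient.mk_surjective _ q
      exact ⟨Submodule.Quotient.mk f, rfl⟩
    have hexκπ : LinearMap.range κ = LinearMap.ker π' := by
      ext q
      constructor
      · rintro ⟨x, rfl⟩
        rw [LinearMap.mem_ker, hκval, hπ'val, Submodule.Quotient.mk_eq_zero]
        exact ⟨α x, rfl⟩
      · intro hq
        obtain ⟨f, rfl⟩ := Submodule.Quotient.mk_surjective _ q
        rw [LinearMap.mem_ker, hπ'val, Submodule.Quotient.mk_eq_zero] at hq
        obtain ⟨m, rfl⟩ := hq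
        refine ⟨ρ m, ?_⟩
        rw [hκval, Submodule.Quotient.eq]
        refine ⟨-(β m), ?_⟩
        show e (σ (-(β m))) = e (α (ρ m)) - e m
        rw [map_neg, map_neg, hσ2 m, map_sub]
        abel
    exact idLE_middle n κ π' hκinj hπ'surj hexκπ (idLE_of_injective hE) hres

/-- If `0 → K → F → N → 0` is exact, `id K ≤ n+1` and `id F ≤ s`, then `id N ≤ max s n`. -/
theorem idLE_coker (s n : ℕ) {K F N : Type u} [AddCommGroup K] [Module R K]
    [AddCommGroup F] [Module R F] [AddCommGroup N] [Module R N]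
    (a : K →ₗ[R] F) (b : F →ₗ[R] N) (ha : Function.Injective a) (hb : Function.Surjective b)
    (hex : LinearMap.range a = LinearMap.ker b)
    (hK : idLE R (n+1) K) (hF : idLE R s F) : idLE R (max s n) N := by
  obtain ⟨E, iE1, iE2, j, hEinj, hj, hK'⟩ := hK
  set W := LinearMap.range (LinearMap.prod a (-j)) with hWdef
  have hWval : ∀ k, ((a k, -(j k)) : F × E) ∈ W := fun k => ⟨k, rfl⟩
  set D := (F × E) ⧸ W with hDdef
  set uE : E →ₗ[R] D := W.mkQ.comp (LinearMap.inr R F E) with huEdef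
  set uF : F →ₗ[R] D := W.mkQ.comp (LinearMap.inl R F E) with huFdef
  have huEval : ∀ e, uE e = Submodule.Quotient.mk ((0, e) : F × E) := fun e => rfl
  have huFval : ∀ f, uF f = Submodule.Quotient.mk ((f, 0) : F × E) := fun f => rfl
  have hνker : W ≤ LinearMap.ker (b.comp (LinearMap.fst R F E)) := by
    rintro x ⟨k, rfl⟩
    show b (a k) = 0
    exact b_a_eq_zero a b hex k
  set ν : D →ₗ[R] N := Submodule.liftQ _ (b.comp (LinearMap.fst R F E)) hνker with hνdef
  have hνval : ∀ x : F × E, ν (Submodule.Quotient.mk x) = b x.1 := fun x => rfl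
  have huEinj : Function.Injective uE := by
    intro e₁ e₂ h
    rw [← sub_eq_zero, ← map_sub] at h
    rw [huEval, Submodule.Quotient.mk_eq_zero] at h
    obtain ⟨k, hk⟩ := h
    have h1 : a k = 0 := congrArg Prod.fst hk
    have h2 : k = 0 := ha (by rw [h1, map_zero])
    have h3 : -(j k) = e₁ - e₂ := congrArg Prod.snd hk
    rw [← sub_eq_zero, ← h3, h2, map_zero, neg_zero]
  have hνsurj : Function.Surjective ν := by
    intro x
    obtain ⟨f, hf⟩ := hb x
    exact ⟨Submodule.Quotient.mk ((f, 0) : F × E), by rw [hνval, hf]⟩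
  have hexEν : LinearMap.range uE = LinearMap.ker ν := by
    ext q
    constructor
    · rintro ⟨e, rfl⟩
      rw [LinearMap.mem_ker, huEval, hνval, map_zero]
    · intro hq
      obtain ⟨⟨f, e⟩, rfl⟩ := Submodule.Quotient.mk_surjective _ q
      rw [LinearMap.mem_ker, hνval] at hq
      have h1 : f ∈ LinearMap.range a := by rw [hex]; exact hq
      obtain ⟨k, hk⟩ := h1
      refine ⟨e + j k, ?_⟩
      rw [huEval, Submodule.Quotient.eq]
      refine ⟨-k, ?_⟩
      rw [map_neg]
      ext
      · show -(a k) = 0 - f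
        rw [hk]; abel
      · show -(-(j k)) = (e + j k) - e
        abel
  have hμker : W ≤ LinearMap.ker ((LinearMap.range j).mkQ.comp (LinearMap.snd R F E)) := by
    rintro x ⟨k, rfl⟩
    rw [LinearMap.mem_ker, LinearMap.comp_apply, Submodule.mkQ_apply,
      Submodule.Quotient.mk_eq_zero]
    exact ⟨-k, by rw [map_neg]; rfl⟩
  set μ : D →ₗ[R] (E ⧸ LinearMap.range j) :=
    Submodule.liftQ _ ((LinearMap.range j).mkQ.comp (LinearMap.snd R F E)) hμker with hμdef
  have hμval : ∀ x : F × E, μ (Submodule.Quotient.mk x) = Submodule.Quotient.mk x.2 :=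
    fun x => rfl
  have huFinj : Function.Injective uF := by
    intro f₁ f₂ h
    rw [← sub_eq_zero, ← map_sub] at h
    rw [huFval, Submodule.Quotient.mk_eq_zero] at h
    obtain ⟨k, hk⟩ := h
    have h1 : -(j k) = 0 := congrArg Prod.snd hk
    have h2 : k = 0 := hj (by rw [map_zero, ← neg_eq_zero]; exact h1)
    have h3 : a k = f₁ - f₂ := congrArg Prod.fst hk
    rw [← sub_eq_zero, ← h3, h2, map_zero]
  have hμsurj : Function.Surjective μ := by
    intro q
    obtain ⟨e, rfl⟩ := Submodule.Quotient.mk_surjective _ q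
    exact ⟨Submodule.Quotient.mk ((0, e) : F × E), rfl⟩
  have hexFμ : LinearMap.range uF = LinearMap.ker μ := by
    ext q
    constructor
    · rintro ⟨f, rfl⟩
      rw [LinearMap.mem_ker, huFval, hμval, Submodule.Quotient.mk_eq_zero]
      exact Submodule.zero_mem _
    · intro hq
      obtain ⟨⟨f, e⟩, rfl⟩ := Submodule.Quotient.mk_surjective _ q
      rw [LinearMap.mem_ker, hμval, Submodule.Quotient.mk_eq_zero] at hq
      obtain ⟨k, hk⟩ := hq
      refine ⟨f + a k, ?_⟩
      rw [huFval, Submodule.Quotient.eq]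
      refine ⟨k, ?_⟩
      ext
      · show a k = (f + a k) - f
        abel
      · show -(j k) = 0 - e
        rw [hk]; abel
  have hD : idLE R (max s n) D :=
    idLE_middle (max s n) uF μ huFinj hμsurj hexFμ
      (idLE_mono (le_max_left s n) hF) (idLE_mono (le_max_right s n) hK')
  exact idLE_of_ses_inj (max s n) uE ν huEinj hνsurj hexEν hEinj hD
theorem inv_of_inj {A B : Type u} [AddCommGroup A] [Module R A] [AddCommGroup B] [Module R B]
    (a : A →ₗ[R] B) (ha : Function.Injective a) (z : LinearMap.range a) :
    a ((LinearEquiv.ofInjective a ha).symm z) = z := by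
  have := (LinearEquiv.ofInjective a ha).apply_symm_apply z
  have h2 := congrArg Subtype.val this
  rwa [LinearEquiv.ofInjective_apply] at h2

end Aux

/-- `C` is an `n`-fold cosyzygy. -/
def CosyzOf : ℕ → ∀ (C : Type u) [AddCommGroup C] [Module R C], Prop
  | 0, _, _, _ => True
  | (n+1), C, _, _ => ∃ (E : Type u) (_ : AddCommGroup E) (_ : Module R E)
      (π : E →ₗ[R] C), Module.Injective R E ∧ Function.Surjective π ∧
        CosyzOf n (LinearMap.ker π)

/-- `C` is an `n`-fold syzygy. -/
def SyzOf : ℕ → ∀ (C : Type u) [AddCommGroup C] [Module R C], Prop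
  | 0, _, _, _ => True
  | (n+1), C, _, _ => ∃ (P : Type u) (_ : AddCommGroup P) (_ : Module R P)
      (ι : C →ₗ[R] P), Module.Projective R P ∧ Function.Injective ι ∧
        SyzOf n (P ⧸ LinearMap.range ι)


namespace Aux

variable {R}


theorem cosyzOf_iso (n : ℕ) : ∀ {M N : Type u} [AddCommGroup M] [Module R M]
    [AddCommGroup N] [Module R N], (M ≃ₗ[R] N) → CosyzOf R n M → CosyzOf R n N := by
  induction n with
  | zero => intro M N _ _ _ _ _ _; trivial
  | succ n ih =>
    intro M N _ _ _ _ e h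
    obtain ⟨E, iE1, iE2, π, hE, hπ, hres⟩ := h
    refine ⟨E, iE1, iE2, e.toLinearMap.comp π, hE, e.surjective.comp hπ, ?_⟩
    have hk : LinearMap.ker (e.toLinearMap.comp π) = LinearMap.ker π := by
      rw [LinearMap.ker_comp, LinearEquiv.ker, Submodule.comap_bot]
    exact ih (LinearEquiv.ofEq _ _ hk.symm) hres

theorem syzOf_iso (n : ℕ) : ∀ {M N : Type u} [AddCommGroup M] [Module R M]
    [AddCommGroup N] [Module R N], (M ≃ₗ[R] N) → SyzOf R n M → SyzOf R n N := by
  induction n with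
  | zero => intro M N _ _ _ _ _ _; trivial
  | succ n ih =>
    intro M N _ _ _ _ e h
    obtain ⟨P, iP1, iP2, ι, hP, hι, hres⟩ := h
    refine ⟨P, iP1, iP2, ι.comp e.symm.toLinearMap, hP, hι.comp e.symm.injective, ?_⟩
    have hr : LinearMap.range (ι.comp e.symm.toLinearMap) = LinearMap.range ι := by
      rw [LinearMap.range_comp, LinearEquiv.range, Submodule.map_top]
    exact ih (Submodule.quotEquivOfEq _ _ hr.symm) hres

/-- Key dimension-shifting lemma: if `C` is an `n`-fold cosyzygy and `pd X ≤ n`, then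
every short exact sequence `0 → C → Z → X → 0` splits. -/
theorem Zlemma (n : ℕ) : ∀ {C Z X : Type u} [AddCommGroup C] [Module R C]
    [AddCommGroup Z] [Module R Z] [AddCommGroup X] [Module R X],
    CosyzOf R n C → pdLE R n X → ∀ (a : C →ₗ[R] Z) (b : Z →ₗ[R] X),
    Function.Injective a → Function.Surjective b →
    LinearMap.range a = LinearMap.ker b → ∃ σ : X →ₗ[R] Z, ∀ x, b (σ x) = x := by
  induction n with
  | zero =>
    intro C Z X _ _ _ _ _ _ hC hX a b ha hb hex
    haveI : Module.Projective R X := hX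
    obtain ⟨σ, hσ⟩ := Module.projective_lifting_property b LinearMap.id hb
    exact ⟨σ, fun x => congrFun (congrArg DFunLike.coe hσ) x⟩
  | succ n ih =>
    intro C Z X _ _ _ _ _ _ hC hX a b ha hb hex
    obtain ⟨E, iE1, iE2, π, hEinj, hπ, hkC⟩ := hC
    obtain ⟨P, iP1, iP2, p, hPproj, hp, hkX⟩ := hX
    haveI : Module.Projective R P := hPproj
    haveI : Module.Injective R E := hEinj
    obtain ⟨h, hh⟩ := Module.projective_lifting_property b p hb
    have hh' : ∀ q, b (h q) = p q := fun q => congrFun (congrArg DFunLike.coe hh) q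
    set K := LinearMap.ker p with hKdef
    have hmem : ∀ k : K, h (k : P) ∈ LinearMap.range a := by
      intro k
      rw [hex, LinearMap.mem_ker, hh']
      exact k.2
    set ψ : K →ₗ[R] C := (LinearEquiv.ofInjective a ha).symm.toLinearMap.comp
      (LinearMap.codRestrict _ (h.comp K.subtype) hmem) with hψdef
    have hψ : ∀ k : K, a (ψ k) = h (k : P) := fun k => inv_of_inj a ha _
    -- pull back `π` along `ψ`
    set δ : (E × K) →ₗ[R] C := (π.comp (LinearMap.fst R E K)) - (ψ.comp (LinearMap.snd R E K))
      with hδdef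
    have hδval : ∀ x k, δ (x, k) = π x - ψ k := fun x k => rfl
    set D := LinearMap.ker δ with hDdef
    set b' : D →ₗ[R] K := (LinearMap.snd R E K).comp D.subtype with hb'def
    have hb'surj : Function.Surjective b' := by
      intro k
      obtain ⟨x, hx⟩ := hπ (ψ k)
      exact ⟨⟨(x, k), by rw [LinearMap.mem_ker, hδval, hx, sub_self]⟩, rfl⟩
    have hmema' : ∀ y : LinearMap.ker π, ((y : E), (0 : K)) ∈ D := by
      rintro ⟨x, hx⟩
      rw [LinearMap.mem_ker, hδval, hx, map_zero, sub_self]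
    set a' : (LinearMap.ker π) →ₗ[R] D :=
      LinearMap.codRestrict _ ((LinearMap.inl R E K).comp (LinearMap.ker π).subtype) hmema'
      with ha'def
    have ha'inj : Function.Injective a' := by
      intro y₁ y₂ hy
      have : ((y₁ : E), (0:K)) = ((y₂ : E), (0:K)) := congrArg Subtype.val hy
      exact Subtype.ext (congrArg Prod.fst this)
    have hexa'b' : LinearMap.range a' = LinearMap.ker b' := by
      ext x
      constructor
      · rintro ⟨y, rfl⟩
        show ((a' y : E × K)).2 = 0
        rfl
      · intro hx
        have h2 : ((x : E × K)).2 = 0 := hx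
        have h3 : π ((x : E × K).1) = 0 := by
          have h4 : δ ((x : E × K).1, (x : E × K).2) = 0 := x.2
          rw [hδval, h2, map_zero, sub_zero] at h4
          exact h4
        refine ⟨⟨(x : E × K).1, h3⟩, ?_⟩
        apply Subtype.ext
        show ((x : E × K).1, (0:K)) = (x : E × K)
        ext
        · rfl
        · exact congrArg Subtype.val h2.symm
    obtain ⟨σ', hσ'⟩ := ih hkC hkX a' b' ha'inj hb'surj hexa'b'
    set ψ' : K →ₗ[R] E := ((LinearMap.fst R E K).comp D.subtype).comp σ' with hψ'def
    have hψ'val : ∀ k, π (ψ' k) = ψ k := by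
      intro k
      have h4 : δ ((σ' k : E × K)) = 0 := (σ' k).2
      have h5 : δ ((σ' k : E × K).1, (σ' k : E × K).2) = 0 := h4
      rw [hδval, sub_eq_zero] at h5
      have h6 : ((σ' k : E × K)).2 = k := hσ' k
      rw [show ψ' k = ((σ' k : E × K)).1 from rfl, h5, h6]
    obtain ⟨τ, hτ⟩ := Module.Injective.out K.subtype (Submodule.injective_subtype K) ψ'
    set h' : P →ₗ[R] Z := h - a.comp (π.comp τ) with hh'def
    have hbh' : ∀ q, b (h' q) = p q := by
      intro q
      show b (h q - a (π (τ q))) = p q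
      rw [map_sub, b_a_eq_zero a b hex, sub_zero, hh']
    have hker : LinearMap.ker p ≤ LinearMap.ker h' := by
      intro q hq
      show h q - a (π (τ q)) = 0
      have h7 : τ q = ψ' ⟨q, hq⟩ := hτ ⟨q, hq⟩
      rw [h7, hψ'val, hψ, sub_self]
    obtain ⟨σ, hσ⟩ := exists_descend p hp h' hker
    refine ⟨σ, fun x => ?_⟩
    obtain ⟨q, rfl⟩ := hp x
    rw [hσ, hbh']
/-- Dual dimension-shifting lemma: if `C` is an `n`-fold syzygy and `id Y ≤ n`, then
every short exact sequence `0 → Y → Z → C → 0` splits. -/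
theorem Z'lemma (n : ℕ) : ∀ {Y Z C : Type u} [AddCommGroup Y] [Module R Y]
    [AddCommGroup Z] [Module R Z] [AddCommGroup C] [Module R C],
    SyzOf R n C → idLE R n Y → ∀ (a : Y →ₗ[R] Z) (b : Z →ₗ[R] C),
    Function.Injective a → Function.Surjective b →
    LinearMap.range a = LinearMap.ker b → ∃ σ : C →ₗ[R] Z, ∀ x, b (σ x) = x := by
  induction n with
  | zero =>
    intro Y Z C _ _ _ _ _ _ hC hY a b ha hb hex
    haveI : Module.Injective R Y := hY
    obtain ⟨ρ, hρ⟩ := Module.Injective.out a ha (LinearMap.id : Y →ₗ[R] Y)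
    obtain ⟨σ, hσ, -⟩ := sec_of_retr a b hb hex ρ (fun y => hρ y)
    exact ⟨σ, hσ⟩
  | succ n ih =>
    intro Y Z C _ _ _ _ _ _ hC hY a b ha hb hex
    obtain ⟨P, iP1, iP2, ι, hPproj, hι, hC'⟩ := hC
    obtain ⟨E, iE1, iE2, e, hEinj, he, hY'⟩ := hY
    haveI : Module.Projective R P := hPproj
    haveI : Module.Injective R E := hEinj
    obtain ⟨h, hh⟩ := Module.Injective.out a ha e
    set q := (LinearMap.range e).mkQ with hqdef
    have hkerq : LinearMap.ker q = LinearMap.range e := Submodule.ker_mkQ _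
    have hdes : LinearMap.ker b ≤ LinearMap.ker (q.comp h) := by
      intro m hm
      rw [← hex] at hm
      obtain ⟨y, rfl⟩ := hm
      show q (h (a y)) = 0
      rw [hh y, hqdef, Submodule.mkQ_apply, Submodule.Quotient.mk_eq_zero]
      exact ⟨y, rfl⟩
    obtain ⟨ψ, hψ⟩ := exists_descend b hb (q.comp h) hdes
    -- push out `ι` along `ψ`
    set W := LinearMap.range (LinearMap.prod ι (-ψ)) with hWdef
    set Z₀ := (P × (E ⧸ LinearMap.range e)) ⧸ W with hZ₀def
    set j : (E ⧸ LinearMap.range e) →ₗ[R] Z₀ :=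
      W.mkQ.comp (LinearMap.inr R P (E ⧸ LinearMap.range e)) with hjdef
    set β : P →ₗ[R] Z₀ := W.mkQ.comp (LinearMap.inl R P (E ⧸ LinearMap.range e)) with hβdef
    have hjval : ∀ y, j y = Submodule.Quotient.mk ((0, y) : P × (E ⧸ LinearMap.range e)) :=
      fun y => rfl
    have hβval : ∀ x, β x = Submodule.Quotient.mk ((x, 0) : P × (E ⧸ LinearMap.range e)) :=
      fun x => rfl
    have hjinj : Function.Injective j := by
      intro y₁ y₂ hy
      rw [← sub_eq_zero, ← map_sub] at hy
      rw [hjval, Submodule.Quotient.mk_eq_zero] at hy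
      obtain ⟨c, hc⟩ := hy
      have h1 : ι c = 0 := congrArg Prod.fst hc
      have h2 : c = 0 := hι (by rw [h1, map_zero])
      have h3 : -(ψ c) = y₁ - y₂ := congrArg Prod.snd hc
      rw [← sub_eq_zero, ← h3, h2, map_zero, neg_zero]
    set π₀ := (LinearMap.range j).mkQ with hπ₀def
    have hπ₀surj : Function.Surjective π₀ := Submodule.mkQ_surjective _
    have hexjπ : LinearMap.range j = LinearMap.ker π₀ := (Submodule.ker_mkQ _).symm
    set φ := π₀.comp β with hφdef
    have hmkdec : ∀ (x : P) (y : E ⧸ LinearMap.range e),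
        π₀ (Submodule.Quotient.mk ((x, y) : P × (E ⧸ LinearMap.range e))) = φ x := by
      intro x y
      have h1 : ((x, y) : P × (E ⧸ LinearMap.range e)) = (x, 0) + (0, y) := by
        ext
        · show x = x + 0; rw [add_zero]
        · show y = 0 + y; rw [zero_add]
      have h2 : π₀ (j y) = 0 := by
        rw [← LinearMap.mem_ker, ← hexjπ]
        exact ⟨y, rfl⟩
      calc π₀ (Submodule.Quotient.mk ((x, y) : P × (E ⧸ LinearMap.range e)))
          = π₀ (Submodule.Quotient.mk ((x, 0) : P × (E ⧸ LinearMap.range e)) + j y) := by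
            rw [hjval]
            congr 1
            rw [← Submodule.Quotient.mk_add, ← h1]
        _ = φ x + π₀ (j y) := by rw [map_add]; rfl
        _ = φ x := by rw [h2, add_zero]
    have hφsurj : Function.Surjective φ := by
      intro q₀
      obtain ⟨z, rfl⟩ := hπ₀surj q₀
      obtain ⟨⟨x, y⟩, rfl⟩ := Submodule.Quotient.mk_surjective _ z
      exact ⟨x, (hmkdec x y).symm⟩
    have hkerφ : LinearMap.ker φ = LinearMap.range ι := by
      ext x
      constructor
      · intro hx
        have h1 : β x ∈ LinearMap.range j := by
          rw [hexjπ]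
          exact hx
        obtain ⟨y, hy⟩ := h1
        have h2 : ((x, 0) : P × (E ⧸ LinearMap.range e)) - (0, y) ∈ W := by
          rw [← Submodule.Quotient.eq]
          rw [hβval] at hy
          rw [hjval] at hy
          exact hy.symm
        obtain ⟨c, hc⟩ := h2
        have h3 : ι c = x := by
          have := congrArg Prod.fst hc
          simpa using this
        exact ⟨c, h3⟩
      · rintro ⟨c, rfl⟩
        rw [LinearMap.mem_ker]
        show π₀ (β (ι c)) = 0
        have h4 : β (ι c) = j (ψ c) := by
          rw [hβval, hjval, Submodule.Quotient.eq]
          refine ⟨c, ?_⟩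
          ext
          · show ι c = ι c - 0
            rw [sub_zero]
          · show -(ψ c) = 0 - ψ c
            rw [zero_sub]
        rw [h4, ← LinearMap.mem_ker, ← hexjπ]
        exact ⟨ψ c, rfl⟩
    have e₀ : (P ⧸ LinearMap.range ι) ≃ₗ[R] (Z₀ ⧸ LinearMap.range j) :=
      (Submodule.quotEquivOfEq _ _ hkerφ.symm).trans (φ.quotKerEquivOfSurjective hφsurj)
    obtain ⟨σ₀, hσ₀⟩ := ih (syzOf_iso n e₀ hC') hY' j π₀ hjinj hπ₀surj hexjπ
    obtain ⟨r₀, hr₀, -⟩ := retr_of_sec j π₀ hjinj hexjπ σ₀ hσ₀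
    set ψhat : P →ₗ[R] (E ⧸ LinearMap.range e) := r₀.comp β with hψhatdef
    have hψhat : ∀ c, ψhat (ι c) = ψ c := by
      intro c
      show r₀ (β (ι c)) = ψ c
      have h4 : β (ι c) = j (ψ c) := by
        rw [hβval, hjval, Submodule.Quotient.eq]
        refine ⟨c, ?_⟩
        ext
        · show ι c = ι c - 0
          rw [sub_zero]
        · show -(ψ c) = 0 - ψ c
          rw [zero_sub]
      rw [h4, hr₀]
    obtain ⟨τ, hτ⟩ := Module.projective_lifting_property q ψhat (Submodule.mkQ_surjective _)
    have hτ' : ∀ x, q (τ x) = ψhat x := fun x => congrFun (congrArg DFunLike.coe hτ) x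
    set s : Z →ₗ[R] E := τ.comp (ι.comp b) with hsdef
    have hmemr : ∀ m, h m - s m ∈ LinearMap.range e := by
      intro m
      rw [← hkerq, LinearMap.mem_ker, map_sub]
      show q (h m) - q (τ (ι (b m))) = 0
      rw [hτ', hψhat, hψ, LinearMap.comp_apply, sub_self]
    set r : Z →ₗ[R] Y := (LinearEquiv.ofInjective e he).symm.toLinearMap.comp
      (LinearMap.codRestrict _ (h - s) hmemr) with hrdef
    have hrval : ∀ m, e (r m) = h m - s m := fun m => inv_of_inj e he _
    have hra : ∀ y, r (a y) = y := by
      intro y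
      apply he
      rw [hrval]
      show h (a y) - τ (ι (b (a y))) = e y
      rw [b_a_eq_zero a b hex, map_zero, map_zero, sub_zero, hh]
    obtain ⟨σ, hσ, -⟩ := sec_of_retr a b hb hex r hra
    exact ⟨σ, hσ⟩
/-- If every module has projective dimension `≤ n`, every module has injective dimension `≤ n`. -/
theorem all_idLE_of_all_pdLE (n : ℕ)
    (h : ∀ (X : Type u) [AddCommGroup X] [Module R X], pdLE R n X) :
    ∀ (Y : Type u) [AddCommGroup Y] [Module R Y], idLE R n Y := by
  have claim : ∀ (m : ℕ) (Y : Type u) [AddCommGroup Y] [Module R Y],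
      CosyzOf R (n - m) Y → idLE R m Y := by
    intro m
    induction m with
    | zero =>
      intro Y _ _ hY
      rw [Nat.sub_zero] at hY
      show Module.Injective R Y
      apply Module.Baer.injective
      intro I g
      set W := LinearMap.range (LinearMap.prod I.subtype (-g)) with hWdef
      set Z₀ := (R × Y) ⧸ W with hZ₀def
      set j : Y →ₗ[R] Z₀ := W.mkQ.comp (LinearMap.inr R R Y) with hjdef
      set β : R →ₗ[R] Z₀ := W.mkQ.comp (LinearMap.inl R R Y) with hβdef
      have hjval : ∀ y, j y = Submodule.Quotient.mk ((0, y) : R × Y) := fun y => rfl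
      have hβval : ∀ x, β x = Submodule.Quotient.mk ((x, 0) : R × Y) := fun x => rfl
      have hjinj : Function.Injective j := by
        intro y₁ y₂ hy
        rw [← sub_eq_zero, ← map_sub] at hy
        rw [hjval, Submodule.Quotient.mk_eq_zero] at hy
        obtain ⟨c, hc⟩ := hy
        have h1 : (c : R) = 0 := congrArg Prod.fst hc
        have h2 : c = 0 := Subtype.ext h1
        have h3 : -(g c) = y₁ - y₂ := congrArg Prod.snd hc
        rw [← sub_eq_zero, ← h3, h2, map_zero, neg_zero]
      set π₀ := (LinearMap.range j).mkQ with hπ₀def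
      have hπ₀surj : Function.Surjective π₀ := Submodule.mkQ_surjective _
      have hexjπ : LinearMap.range j = LinearMap.ker π₀ := (Submodule.ker_mkQ _).symm
      obtain ⟨σ₀, hσ₀⟩ := Zlemma n hY (h _) j π₀ hjinj hπ₀surj hexjπ
      obtain ⟨r₀, hr₀, -⟩ := retr_of_sec j π₀ hjinj hexjπ σ₀ hσ₀
      refine ⟨r₀.comp β, fun x mem => ?_⟩
      have h4 : β x = j (g ⟨x, mem⟩) := by
        rw [hβval, hjval, Submodule.Quotient.eq]
        refine ⟨⟨x, mem⟩, ?_⟩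
        ext
        · show (⟨x, mem⟩ : I) = x - 0
          rw [sub_zero]
        · show -(g ⟨x, mem⟩) = 0 - g ⟨x, mem⟩
          rw [zero_sub]
      show r₀ (β x) = g ⟨x, mem⟩
      rw [h4, hr₀]
    | succ m ih =>
      intro Y _ _ hY
      obtain ⟨E, iE1, iE2, f, hEinj, hf⟩ := exists_injective_embedding (R := R) Y
      refine ⟨E, iE1, iE2, f, hEinj, hf, ?_⟩
      apply ih
      rcases hnm : n - m with _ | k
      · trivial
      · have hkey : n - (m + 1) = k := by omega
        rw [hkey] at hY
        refine ⟨E, iE1, iE2, (LinearMap.range f).mkQ, hEinj, Submodule.mkQ_surjective _, ?_⟩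
        have e1 : Y ≃ₗ[R] LinearMap.range f := LinearEquiv.ofInjective f hf
        have e2 : (LinearMap.range f : Submodule R E) ≃ₗ[R]
            LinearMap.ker (LinearMap.range f).mkQ :=
          LinearEquiv.ofEq _ _ (Submodule.ker_mkQ _).symm
        exact cosyzOf_iso k (e1.trans e2) hY
  intro Y _ _
  apply claim n Y
  rw [Nat.sub_self]
  trivial

/-- If every module has injective dimension `≤ n`, every module has projective dimension `≤ n`. -/
theorem all_pdLE_of_all_idLE (n : ℕ)
    (h : ∀ (Y : Type u) [AddCommGroup Y] [Module R Y], idLE R n Y) :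
    ∀ (X : Type u) [AddCommGroup X] [Module R X], pdLE R n X := by
  have claim : ∀ (m : ℕ) (X : Type u) [AddCommGroup X] [Module R X],
      SyzOf R (n - m) X → pdLE R m X := by
    intro m
    induction m with
    | zero =>
      intro X _ _ hX
      rw [Nat.sub_zero] at hX
      show Module.Projective R X
      obtain ⟨F, iF1, iF2, p, hFproj, hp⟩ := exists_free_cover (R := R) X
      haveI : Module.Projective R F := hFproj
      obtain ⟨σ, hσ⟩ := Z'lemma n hX (h _) (LinearMap.ker p).subtype p
        (Submodule.injective_subtype _) hp (Submodule.range_subtype _)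
      exact Module.Projective.of_split σ p (LinearMap.ext fun x => hσ x)
    | succ m ih =>
      intro X _ _ hX
      obtain ⟨F, iF1, iF2, p, hFproj, hp⟩ := exists_free_cover (R := R) X
      refine ⟨F, iF1, iF2, p, hFproj, hp, ?_⟩
      apply ih
      rcases hnm : n - m with _ | k
      · trivial
      · have hkey : n - (m + 1) = k := by omega
        rw [hkey] at hX
        refine ⟨F, iF1, iF2, (LinearMap.ker p).subtype, hFproj,
          Submodule.injective_subtype _, ?_⟩
        have e1 : (F ⧸ LinearMap.range (LinearMap.ker p).subtype) ≃ₗ[R] X :=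
          (Submodule.quotEquivOfEq _ _ (Submodule.range_subtype _)).trans
            (p.quotKerEquivOfSurjective hp)
        exact syzOf_iso k e1.symm hX
  intro X _ _
  apply claim n X
  rw [Nat.sub_self]
  trivial
/-- If all injective modules have `pd ≤ s` and the global dimension is finite,
then every module has `pd ≤ s`. -/
theorem all_pdLE_of_inj_pdLE (d s : ℕ)
    (hd : ∀ (M : Type u) [AddCommGroup M] [Module R M], pdLE R d M)
    (hs : ∀ (I : Type u) [AddCommGroup I] [Module R I], Module.Injective R I → pdLE R s I) :
    ∀ (M : Type u) [AddCommGroup M] [Module R M], pdLE R s M := by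
  have claim : ∀ (k : ℕ) (M : Type u) [AddCommGroup M] [Module R M],
      pdLE R (max s (d - k)) M := by
    intro k
    induction k with
    | zero =>
      intro M _ _
      refine pdLE_mono ?_ (hd M)
      rw [Nat.sub_zero]
      exact le_max_right s d
    | succ k ih =>
      intro M _ _
      obtain ⟨E, iE1, iE2, f, hEinj, hf⟩ := exists_injective_embedding (R := R) M
      have hC : pdLE R (max s (d - k)) (E ⧸ LinearMap.range f) := ih _
      have hmax : max s (d - k) ≤ max s (d - (k+1)) + 1 := by
        apply max_le
        · exact le_trans (le_max_left s (d - (k+1))) (Nat.le_succ _)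
        · have h1 : d - k ≤ (d - (k+1)) + 1 := by omega
          exact le_trans h1 (Nat.succ_le_succ (le_max_right s _))
      have hC2 : pdLE R (max s (d - (k+1)) + 1) (E ⧸ LinearMap.range f) := pdLE_mono hmax hC
      have hM := pdLE_ker s (max s (d - (k+1))) f (LinearMap.range f).mkQ hf
        (Submodule.mkQ_surjective _) (Submodule.ker_mkQ _).symm (hs E hEinj) hC2
      have heq : max s (max s (d - (k+1))) = max s (d - (k+1)) := by
        rw [← max_assoc, max_self]
      rwa [heq] at hM
  intro M _ _
  have := claim d M
  rwa [Nat.sub_self, max_eq_left (Nat.zero_le s)] at this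

/-- If all projective modules have `id ≤ t` and all modules have `id ≤ d`,
then every module has `id ≤ t`. -/
theorem all_idLE_of_proj_idLE (d t : ℕ)
    (hd : ∀ (M : Type u) [AddCommGroup M] [Module R M], idLE R d M)
    (ht : ∀ (P : Type u) [AddCommGroup P] [Module R P], Module.Projective R P → idLE R t P) :
    ∀ (N : Type u) [AddCommGroup N] [Module R N], idLE R t N := by
  have claim : ∀ (k : ℕ) (N : Type u) [AddCommGroup N] [Module R N],
      idLE R (max t (d - k)) N := by
    intro k
    induction k with
    | zero =>
      intro N _ _
      refine idLE_mono ?_ (hd N)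
      rw [Nat.sub_zero]
      exact le_max_right t d
    | succ k ih =>
      intro N _ _
      obtain ⟨F, iF1, iF2, p, hFproj, hp⟩ := exists_free_cover (R := R) N
      have hK : idLE R (max t (d - k)) (LinearMap.ker p) := ih _
      have hmax : max t (d - k) ≤ max t (d - (k+1)) + 1 := by
        apply max_le
        · exact le_trans (le_max_left t (d - (k+1))) (Nat.le_succ _)
        · have h1 : d - k ≤ (d - (k+1)) + 1 := by omega
          exact le_trans h1 (Nat.succ_le_succ (le_max_right t _))
      have hK2 : idLE R (max t (d - (k+1)) + 1) (LinearMap.ker p) := idLE_mono hmax hK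
      have hN := idLE_coker t (max t (d - (k+1))) (LinearMap.ker p).subtype p
        (Submodule.injective_subtype _) hp (Submodule.range_subtype _) hK2 (ht F hFproj)
      have heq : max t (max t (d - (k+1))) = max t (d - (k+1)) := by
        rw [← max_assoc, max_self]
      rwa [heq] at hN
  intro N _ _
  have := claim d N
  rwa [Nat.sub_self, max_eq_left (Nat.zero_le t)] at this
end Aux

namespace Aux

variable {R}

theorem pdim_le_iff {M : Type u} [AddCommGroup M] [Module R M] {n : ℕ} :
    pdim R M ≤ (n : ℕ∞) ↔ pdLE R n M := by
  constructor
  · intro hle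
    by_contra hn
    have hlb : ∀ x ∈ ((↑) '' {m : ℕ | pdLE R m M} : Set ℕ∞), ((n+1 : ℕ) : ℕ∞) ≤ x := by
      rintro x ⟨m, hm, rfl⟩
      have h1 : ¬ m ≤ n := fun hmn => hn (pdLE_mono hmn hm)
      exact Nat.cast_le.mpr (by omega)
    have h2 : ((n+1 : ℕ) : ℕ∞) ≤ pdim R M := le_sInf hlb
    have h3 : ((n+1 : ℕ) : ℕ∞) ≤ (n : ℕ∞) := le_trans h2 hle
    exact absurd (Nat.cast_le.mp h3) (by omega)
  · intro hn
    exact sInf_le ⟨n, hn, rfl⟩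

theorem idim_le_iff {M : Type u} [AddCommGroup M] [Module R M] {n : ℕ} :
    idim R M ≤ (n : ℕ∞) ↔ idLE R n M := by
  constructor
  · intro hle
    by_contra hn
    have hlb : ∀ x ∈ ((↑) '' {m : ℕ | idLE R m M} : Set ℕ∞), ((n+1 : ℕ) : ℕ∞) ≤ x := by
      rintro x ⟨m, hm, rfl⟩
      have h1 : ¬ m ≤ n := fun hmn => hn (idLE_mono hmn hm)
      exact Nat.cast_le.mpr (by omega)
    have h2 : ((n+1 : ℕ) : ℕ∞) ≤ idim R M := le_sInf hlb
    have h3 : ((n+1 : ℕ) : ℕ∞) ≤ (n : ℕ∞) := le_trans h2 hle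
    exact absurd (Nat.cast_le.mp h3) (by omega)
  · intro hn
    exact sInf_le ⟨n, hn, rfl⟩

end Aux

open Aux

/-- For a ring of finite global dimension, the global dimension equals the supremum of
injective dimensions of projectives, and the supremum of projective dimensions of injectives. -/
theorem gldim_eq_sup_id_proj_eq_sup_pd_inj
    (hfin : ∃ d : ℕ, ∀ (M : Type u) [AddCommGroup M] [Module R M], pdLE R d M) :
    (⨆ M : ModuleCat.{u} R, pdim R M) =
      (⨆ P : {P : ModuleCat.{u} R // Module.Projective R P}, idim R P.1) ∧
    (⨆ M : ModuleCat.{u} R, pdim R M) =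
      (⨆ I : {I : ModuleCat.{u} R // Module.Injective R I}, pdim R I.1) := by
  obtain ⟨d, hd⟩ := hfin
  have hgle : (⨆ M : ModuleCat.{u} R, pdim R M) ≤ (d : ℕ∞) :=
    iSup_le fun M => pdim_le_iff.mpr (hd M)
  have hgne : (⨆ M : ModuleCat.{u} R, pdim R M) ≠ ⊤ := by
    intro h
    rw [h] at hgle
    exact absurd (top_le_iff.mp hgle) (by simp)
  obtain ⟨g', hg'0⟩ := WithTop.ne_top_iff_exists.mp hgne
  have hg' : (g' : ℕ∞) = ⨆ M : ModuleCat.{u} R, pdim R M := by exact_mod_cast hg'0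
  have hall : ∀ (M : Type u) [AddCommGroup M] [Module R M], pdLE R g' M := by
    intro M _ _
    apply pdim_le_iff.mp
    rw [hg']
    exact le_iSup (fun M : ModuleCat.{u} R => pdim R M) (ModuleCat.of R M)
  constructor
  · apply le_antisymm
    · rcases eq_or_ne (⨆ P : {P : ModuleCat.{u} R // Module.Projective R P}, idim R P.1) ⊤
        with htop | hne
      · rw [htop]; exact le_top
      · obtain ⟨t', ht'0⟩ := WithTop.ne_top_iff_exists.mp hne
        have ht' : (t' : ℕ∞) = ⨆ P : {P : ModuleCat.{u} R // Module.Projective R P}, idim R P.1 := by exact_mod_cast ht'0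
        have hproj : ∀ (P : Type u) [AddCommGroup P] [Module R P],
            Module.Projective R P → idLE R t' P := by
          intro P _ _ hP
          apply idim_le_iff.mp
          rw [ht']
          exact le_iSup (fun P : {P : ModuleCat.{u} R // Module.Projective R P} => idim R P.1)
            ⟨ModuleCat.of R P, hP⟩
        have hallid := all_idLE_of_proj_idLE d t' (all_idLE_of_all_pdLE d hd) hproj
        have hallpd := all_pdLE_of_all_idLE t' hallid
        rw [← ht']
        exact iSup_le fun M => pdim_le_iff.mpr (hallpd M)
    · have hallid := all_idLE_of_all_pdLE g' hall
      apply iSup_le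
      intro P
      rw [← hg']
      exact idim_le_iff.mpr (hallid P.1)
  · apply le_antisymm
    · rcases eq_or_ne (⨆ I : {I : ModuleCat.{u} R // Module.Injective R I}, pdim R I.1) ⊤
        with htop | hne
      · rw [htop]; exact le_top
      · obtain ⟨s', hs'0⟩ := WithTop.ne_top_iff_exists.mp hne
        have hs' : (s' : ℕ∞) = ⨆ I : {I : ModuleCat.{u} R // Module.Injective R I}, pdim R I.1 := by exact_mod_cast hs'0
        have hinj : ∀ (I : Type u) [AddCommGroup I] [Module R I],
            Module.Injective R I → pdLE R s' I := by
          intro I _ _ hI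
          apply pdim_le_iff.mp
          rw [hs']
          exact le_iSup (fun I : {I : ModuleCat.{u} R // Module.Injective R I} => pdim R I.1)
            ⟨ModuleCat.of R I, hI⟩
        have hallp := all_pdLE_of_inj_pdLE d s' hd hinj
        rw [← hs']
        exact iSup_le fun M => pdim_le_iff.mpr (hallp M)
    · exact iSup_le fun I => le_iSup (fun M : ModuleCat.{u} R => pdim R M) I.1
end

section
/- Let R be a ring such that the classes of n-exact and (n+1)-exact short exact sequences of R-modules coincide. Then every module admitting a finite resolution 0 → P_{n+1} → ⋯ → P_0 → M → 0 by finitely generated projectives has projective dimension at most n. -/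
universe u

open CategoryTheory

variable (R : Type u) [Ring R]

section Aux
variable {R}

theorem projective_of_subsingleton (M : Type u) [AddCommGroup M] [Module R M]
    [Subsingleton M] : Module.Projective R M :=
  Module.Projective.of_split (M := PUnit.{u+1} →₀ R) (0 : M →ₗ[R] _) 0
    (LinearMap.ext fun _ => Subsingleton.elim _ _)

theorem resBy_congr {pred : ∀ (M : Type u) [AddCommGroup M] [Module R M], Prop}
    (hpred : ∀ (M N : Type u) [AddCommGroup M] [Module R M] [AddCommGroup N] [Module R N],
      (M ≃ₗ[R] N) → pred M → pred N) :
    ∀ (n : ℕ) (M N : Type u) [AddCommGroup M] [Module R M] [AddCommGroup N] [Module R N],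
      (M ≃ₗ[R] N) → ResBy R pred n M → ResBy R pred n N := by
  intro n
  induction n with
  | zero => intro M N _ _ _ _ e hM; exact hpred M N e hM
  | succ n ih =>
    rintro M N _ _ _ _ e ⟨P, iP, mP, f, h1, h2, h3⟩
    refine ⟨P, iP, mP, e.toLinearMap ∘ₗ f, h1, ?_, ?_⟩
    · rw [LinearMap.coe_comp]; exact e.surjective.comp h2
    · rw [LinearEquiv.ker_comp (e'' := e) f]; exact h3

theorem pdLE_congr {M N : Type u} [AddCommGroup M] [Module R M] [AddCommGroup N] [Module R N]
    (e : M ≃ₗ[R] N) {n : ℕ} (h : pdLE R n M) : pdLE R n N :=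
  resBy_congr (fun M' _ _ _ _ _ e h => haveI : Module.Projective R M' := h; Module.Projective.of_equiv e) n _ _ e h

theorem fpres_congr {M N : Type u} [AddCommGroup M] [Module R M] [AddCommGroup N] [Module R N]
    (e : M ≃ₗ[R] N) {n : ℕ} (h : FPRes R n M) : FPRes R n N :=
  resBy_congr (fun _ _ _ _ _ _ e h =>
    ⟨haveI := h.1; Module.Finite.equiv e, haveI := h.2; Module.Projective.of_equiv e⟩)
    n _ _ e h

theorem subsingleton_ker_id {M : Type u} [AddCommGroup M] [Module R M] :
    Subsingleton (LinearMap.ker (LinearMap.id : M →ₗ[R] M)) := by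
  constructor
  rintro ⟨a, ha⟩ ⟨b, hb⟩
  simp only [LinearMap.mem_ker, LinearMap.id_apply] at ha hb
  simp [Subtype.ext_iff, ha, hb]

theorem pdLE_of_projective : ∀ (n : ℕ) (M : Type u) [AddCommGroup M] [Module R M],
    Module.Projective R M → pdLE R n M := by
  intro n
  induction n with
  | zero => intro M _ _ h; exact h
  | succ n ih =>
    intro M _ _ h
    refine ⟨M, ‹_›, ‹_›, LinearMap.id, h, Function.surjective_id, ?_⟩
    haveI := subsingleton_ker_id (R := R) (M := M)
    exact ih _ (projective_of_subsingleton _)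

theorem fpres_of_finite_projective :
    ∀ (n : ℕ) (M : Type u) [AddCommGroup M] [Module R M],
      Module.Finite R M → Module.Projective R M → FPRes R n M := by
  intro n
  induction n with
  | zero => intro M _ _ h1 h2; exact ⟨h1, h2⟩
  | succ n ih =>
    intro M _ _ h1 h2
    refine ⟨M, ‹_›, ‹_›, LinearMap.id, ⟨h1, h2⟩, Function.surjective_id, ?_⟩
    haveI := subsingleton_ker_id (R := R) (M := M)
    exact ih _ (Module.Finite.of_surjective (0 : R →ₗ[R] _)
      (fun x => ⟨0, Subsingleton.elim _ _⟩)) (projective_of_subsingleton _)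

theorem fpres_finite {n : ℕ} {M : Type u} [AddCommGroup M] [Module R M]
    (h : FPRes R n M) : Module.Finite R M := by
  cases n with
  | zero => exact h.1
  | succ n =>
    obtain ⟨P, iP, mP, f, ⟨h1, _⟩, h2, _⟩ := h
    haveI := h1
    exact Module.Finite.of_surjective f h2

/-- If `π` has a section `s`, then the domain splits as `ker π × B`. -/
noncomputable def splitEquiv {A B : Type u} [AddCommGroup A] [Module R A]
    [AddCommGroup B] [Module R B] (π : A →ₗ[R] B) (s : B →ₗ[R] A)
    (h : π ∘ₗ s = LinearMap.id) : A ≃ₗ[R] (LinearMap.ker π × B) :=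
  LinearEquiv.ofLinear
    (LinearMap.prod
      (LinearMap.codRestrict (LinearMap.ker π) (LinearMap.id - s ∘ₗ π)
        (fun x => by
          simp only [LinearMap.mem_ker, LinearMap.sub_apply, LinearMap.id_apply,
            LinearMap.comp_apply, map_sub]
          have := LinearMap.congr_fun h (π x)
          simp only [LinearMap.comp_apply, LinearMap.id_apply] at this
          rw [this, sub_self]))
      π)
    ((LinearMap.ker π).subtype ∘ₗ LinearMap.fst R _ _ + s ∘ₗ LinearMap.snd R _ _)
    (by
      apply LinearMap.ext
      rintro ⟨⟨x, hx⟩, b⟩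
      have hs := LinearMap.congr_fun h b
      simp only [LinearMap.comp_apply, LinearMap.id_apply] at hs
      simp only [LinearMap.mem_ker] at hx
      simp only [LinearMap.comp_apply, LinearMap.add_apply, LinearMap.fst_apply,
        LinearMap.snd_apply, Submodule.subtype_apply, LinearMap.prod_apply, Pi.prod,
        LinearMap.codRestrict_apply, LinearMap.sub_apply, LinearMap.id_apply, map_add, hx, hs]
      refine Prod.ext (Subtype.ext ?_) ?_
      · simp [hx, hs]
      · simp [hx, hs]
    )
    (by
      apply LinearMap.ext
      intro x
      simp [LinearMap.codRestrict_apply, Pi.prod])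

/-- `Submodule.prod` is equivalent to the product of the submodules. -/
def prodSelfEquiv {M N : Type u} [AddCommGroup M] [Module R M] [AddCommGroup N] [Module R N]
    (p : Submodule R M) (q : Submodule R N) : ↥(p.prod q) ≃ₗ[R] (↥p × ↥q) :=
  LinearEquiv.ofLinear
    (LinearMap.prod
      (LinearMap.codRestrict p (LinearMap.fst R M N ∘ₗ (p.prod q).subtype) fun x => x.2.1)
      (LinearMap.codRestrict q (LinearMap.snd R M N ∘ₗ (p.prod q).subtype) fun x => x.2.2))
    (LinearMap.codRestrict (p.prod q)
      (LinearMap.prodMap p.subtype q.subtype) fun x => ⟨x.1.2, x.2.2⟩)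
    (by
      apply LinearMap.ext
      rintro ⟨⟨x, hx⟩, ⟨y, hy⟩⟩
      refine Prod.ext (Subtype.ext ?_) (Subtype.ext ?_) <;>
        rfl)
    (by
      apply LinearMap.ext
      rintro ⟨⟨x, y⟩, hxy⟩
      refine Subtype.ext ?_
      rfl)
theorem schanuel_side {P Q M : Type u} [AddCommGroup P] [Module R P] [AddCommGroup Q]
    [Module R Q] [AddCommGroup M] [Module R M] (f : P →ₗ[R] M) (g : Q →ₗ[R] M)
    (hf : Function.Surjective f) (hQ : Module.Projective R Q) :
    Nonempty (↥(LinearMap.ker (f ∘ₗ LinearMap.fst R P Q - g ∘ₗ LinearMap.snd R P Q))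
      ≃ₗ[R] (↥(LinearMap.ker f) × Q)) := by
  haveI := hQ
  set d : P × Q →ₗ[R] M := f ∘ₗ LinearMap.fst R P Q - g ∘ₗ LinearMap.snd R P Q with hd
  have hmem : ∀ x : P × Q, x ∈ LinearMap.ker d ↔ f x.1 = g x.2 := by
    intro x
    simp [hd, LinearMap.mem_ker, sub_eq_zero]
  set π₂ : ↥(LinearMap.ker d) →ₗ[R] Q :=
    LinearMap.snd R P Q ∘ₗ (LinearMap.ker d).subtype with hπ₂
  have hπ₂surj : Function.Surjective π₂ := by
    intro q
    obtain ⟨p, hp⟩ := hf (g q)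
    exact ⟨⟨(p, q), (hmem (p, q)).2 hp⟩, rfl⟩
  obtain ⟨s, hs⟩ := Module.projective_lifting_property π₂ LinearMap.id
    (LinearMap.range_eq_top.1 (LinearMap.range_eq_top.2 hπ₂surj))
  have e1 := splitEquiv π₂ s hs
  -- now identify `ker π₂` with `ker f`
  have hker : ∀ x : ↥(LinearMap.ker d), x ∈ LinearMap.ker π₂ → f ((x : P × Q).1) = 0 := by
    intro x hx
    have h1 : f ((x : P × Q).1) = g ((x : P × Q).2) := (hmem _).1 x.2
    have h2 : ((x : P × Q).2) = 0 := hx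
    rw [h1, h2, map_zero]
  set u : ↥(LinearMap.ker π₂) →ₗ[R] ↥(LinearMap.ker f) :=
    LinearMap.codRestrict (LinearMap.ker f)
      (LinearMap.fst R P Q ∘ₗ (LinearMap.ker d).subtype ∘ₗ (LinearMap.ker π₂).subtype)
      (fun x => hker x.1 x.2) with hu
  have hubij : Function.Bijective u := by
    constructor
    · rintro ⟨⟨⟨p, q⟩, hpq⟩, hx⟩ ⟨⟨⟨p', q'⟩, hpq'⟩, hx'⟩ hupq
      have h1 : p = p' := congrArg Subtype.val hupq
      have h2 : q = 0 := hx
      have h2' : q' = 0 := hx'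
      subst h1 h2; simp_all
    · rintro ⟨p, hp⟩
      have hmem1 : (p, (0 : Q)) ∈ LinearMap.ker d := by
        rw [hmem]; simpa using hp
      refine ⟨⟨⟨(p, 0), hmem1⟩, ?_⟩, rfl⟩
      show π₂ _ = 0
      simp [hπ₂]
  exact ⟨e1.trans ((LinearEquiv.ofBijective u hubij).prodCongr (LinearEquiv.refl R Q))⟩

theorem schanuel {P Q M : Type u} [AddCommGroup P] [Module R P] [AddCommGroup Q]
    [Module R Q] [AddCommGroup M] [Module R M] (f : P →ₗ[R] M) (g : Q →ₗ[R] M)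
    (hP : Module.Projective R P) (hQ : Module.Projective R Q)
    (hf : Function.Surjective f) (hg : Function.Surjective g) :
    Nonempty ((↥(LinearMap.ker f) × Q) ≃ₗ[R] (↥(LinearMap.ker g) × P)) := by
  obtain ⟨e1⟩ := schanuel_side f g hf hQ
  obtain ⟨e2⟩ := schanuel_side g f hg hP
  set d : P × Q →ₗ[R] M := f ∘ₗ LinearMap.fst R P Q - g ∘ₗ LinearMap.snd R P Q with hd
  set d' : Q × P →ₗ[R] M := g ∘ₗ LinearMap.fst R Q P - f ∘ₗ LinearMap.snd R Q P with hd'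
  set E : (P × Q) ≃ₗ[R] (Q × P) := LinearEquiv.prodComm R P Q with hE
  have hmap : (LinearMap.ker d).map (E : (P × Q) →ₗ[R] (Q × P)) = LinearMap.ker d' := by
    ext x
    have hmemd : ∀ y : P × Q, y ∈ LinearMap.ker d ↔ f y.1 = g y.2 := fun y => by
      simp [hd, LinearMap.mem_ker, sub_eq_zero]
    have hmemd' : ∀ y : Q × P, y ∈ LinearMap.ker d' ↔ g y.1 = f y.2 := fun y => by
      simp [hd', LinearMap.mem_ker, sub_eq_zero]
    constructor
    · rintro ⟨y, hy, rfl⟩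
      have hy' : f y.1 = g y.2 := (hmemd y).1 hy
      refine (hmemd' _).2 ?_
      simpa [hE] using hy'.symm
    · intro hx
      have hx' : g x.1 = f x.2 := (hmemd' x).1 hx
      refine ⟨E.symm x, (hmemd _).2 ?_, by simp⟩
      simpa [hE] using hx'.symm
  have e3 : ↥(LinearMap.ker d) ≃ₗ[R] ↥(LinearMap.ker d') :=
    (E.submoduleMap (LinearMap.ker d)).trans (LinearEquiv.ofEq _ _ hmap)
  exact ⟨e1.symm.trans (e3.trans e2)⟩
theorem pdLE_prod : ∀ (n : ℕ) (M N : Type u) [AddCommGroup M] [Module R M]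
    [AddCommGroup N] [Module R N], pdLE R n M → pdLE R n N → pdLE R n (M × N) := by
  intro n
  induction n with
  | zero =>
    intro M N _ _ _ _ hM hN
    haveI : Module.Projective R M := hM
    haveI : Module.Projective R N := hN
    exact (inferInstance : Module.Projective R (M × N))
  | succ n ih =>
    rintro M N _ _ _ _ ⟨P, iP, mP, f, hP, hf, hkf⟩ ⟨Q, iQ, mQ, g, hQ, hg, hkg⟩
    haveI := hP; haveI := hQ
    refine ⟨P × Q, inferInstance, inferInstance, LinearMap.prodMap f g,
      (inferInstance : Module.Projective R (P × Q)), ?_, ?_⟩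
    · rw [LinearMap.coe_prodMap]
      exact Function.Surjective.prodMap hf hg
    · have hker : LinearMap.ker (LinearMap.prodMap f g)
          = (LinearMap.ker f).prod (LinearMap.ker g) := LinearMap.ker_prodMap f g
      rw [hker]
      exact pdLE_congr (prodSelfEquiv _ _).symm (ih _ _ hkf hkg)

theorem pdLE_retract : ∀ (n : ℕ) (M N : Type u) [AddCommGroup M] [Module R M]
    [AddCommGroup N] [Module R N] (i : M →ₗ[R] N) (r : N →ₗ[R] M),
    r ∘ₗ i = LinearMap.id → pdLE R n N → pdLE R n M := by
  intro n
  induction n with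
  | zero =>
    intro M N _ _ _ _ i r hri hN
    haveI : Module.Projective R N := hN
    exact Module.Projective.of_split i r hri
  | succ n ih =>
    rintro M N _ _ _ _ i r hri ⟨P, iP, mP, q, hP, hq, hkq⟩
    -- N ≃ ker r × M
    have e : N ≃ₗ[R] (↥(LinearMap.ker r) × M) := splitEquiv r i hri
    -- free covers of `ker r` and `M`
    set C := ↥(LinearMap.ker r) with hC
    set tC : (C →₀ R) →ₗ[R] C := Finsupp.linearCombination R _root_.id with htC
    set tM : (M →₀ R) →ₗ[R] M := Finsupp.linearCombination R _root_.id with htM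
    have htCs : Function.Surjective tC := Finsupp.linearCombination_id_surjective R C
    have htMs : Function.Surjective tM := Finsupp.linearCombination_id_surjective R M
    set q' : ((C →₀ R) × (M →₀ R)) →ₗ[R] N :=
      e.symm.toLinearMap ∘ₗ LinearMap.prodMap tC tM with hq'
    have hq's : Function.Surjective q' := by
      rw [hq', LinearMap.coe_comp, LinearMap.coe_prodMap]
      exact e.symm.surjective.comp (Function.Surjective.prodMap htCs htMs)
    have hkq' : LinearMap.ker q' = LinearMap.ker (LinearMap.prodMap tC tM) := by
      rw [hq']; exact LinearEquiv.ker_comp (e'' := e.symm) _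
    -- Schanuel for the two covers `q` and `q'` of `N`
    obtain ⟨es⟩ := schanuel q' q
      (inferInstance : Module.Projective R ((C →₀ R) × (M →₀ R))) hP hq's hq
    -- `ker q × ((C →₀ R) × (M →₀ R))` has pd ≤ n
    have h1 : pdLE R n (↥(LinearMap.ker q) × ((C →₀ R) × (M →₀ R))) :=
      pdLE_prod n _ _ hkq (pdLE_of_projective n _ inferInstance)
    have h2 : pdLE R n (↥(LinearMap.ker q') × P) := pdLE_congr es.symm h1
    -- identify ker q' with ker tC × ker tM
    have e2 : ↥(LinearMap.ker q') ≃ₗ[R] (↥(LinearMap.ker tC) × ↥(LinearMap.ker tM)) := by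
      rw [hkq', LinearMap.ker_prodMap]
      exact prodSelfEquiv _ _
    have h3 : pdLE R n ((↥(LinearMap.ker tC) × ↥(LinearMap.ker tM)) × P) :=
      pdLE_congr (e2.prodCongr (LinearEquiv.refl R P)) h2
    -- ker tM is a retract of that
    have h4 : pdLE R n (↥(LinearMap.ker tM)) := by
      refine ih _ _ (LinearMap.inl R _ P ∘ₗ LinearMap.inr R (↥(LinearMap.ker tC)) _)
        (LinearMap.snd R _ _ ∘ₗ LinearMap.fst R _ P) ?_ h3
      apply LinearMap.ext; intro x; simp
    exact ⟨M →₀ R, inferInstance, inferInstance, tM, inferInstance, htMs, h4⟩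
section DS
open DirectSum

variable {ι : Type u} [DecidableEq ι]

theorem directSum_apply_toModule {P : ι → Type u} {N : ι → Type u}
    [∀ i, AddCommGroup (P i)] [∀ i, Module R (P i)]
    [∀ i, AddCommGroup (N i)] [∀ i, Module R (N i)]
    (f : ∀ i, P i →ₗ[R] N i) (x : ⨁ i, P i) (j : ι) :
    (DirectSum.toModule R ι (⨁ i, N i)
      (fun i => DirectSum.lof R ι N i ∘ₗ f i) x) j = f j (x j) := by
  induction x using DirectSum.induction_on with
  | zero => simp
  | of i b =>
    rw [← DirectSum.lof_eq_of R, DirectSum.toModule_lof]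
    by_cases h : i = j
    · subst h
      rw [LinearMap.comp_apply, DirectSum.lof_eq_of R, DirectSum.lof_eq_of R,
        DirectSum.of_eq_same, DirectSum.of_eq_same]
    · rw [LinearMap.comp_apply, DirectSum.lof_eq_of R, DirectSum.lof_eq_of R,
        DirectSum.of_eq_of_ne _ _ _ (Ne.symm h), DirectSum.of_eq_of_ne _ _ _ (Ne.symm h), map_zero]
  | add x y hx hy =>
    rw [map_add, DirectSum.add_apply, DirectSum.add_apply, map_add, hx, hy]

theorem pdLE_directSum : ∀ (n : ℕ) {ι : Type u} [DecidableEq ι] (N : ι → Type u)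
    [∀ i, AddCommGroup (N i)] [∀ i, Module R (N i)],
    (∀ i, pdLE R n (N i)) → pdLE R n (⨁ i, N i) := by
  intro n
  induction n with
  | zero =>
    intro ι _ N _ _ h
    haveI : ∀ i, Module.Projective R (N i) := fun i => h i
    exact (inferInstance : Module.Projective R (Π₀ i, N i))
  | succ n ih =>
    intro ι _ N _ _ h
    choose P iAC iM f hproj hsurj hker using h
    letI : ∀ i, AddCommGroup (P i) := iAC
    letI : ∀ i, Module R (P i) := iM
    set F : (⨁ i, P i) →ₗ[R] (⨁ i, N i) :=
      DirectSum.toModule R ι (⨁ i, N i) (fun i => DirectSum.lof R ι N i ∘ₗ f i) with hF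
    have hFapp : ∀ (x : ⨁ i, P i) (j : ι), (F x) j = f j (x j) :=
      directSum_apply_toModule f
    have hFsurj : Function.Surjective F := by
      intro y
      induction y using DirectSum.induction_on with
      | zero => exact ⟨0, map_zero F⟩
      | of i b =>
        obtain ⟨p, hp⟩ := hsurj i b
        refine ⟨DirectSum.lof R ι P i p, ?_⟩
        rw [hF, DirectSum.toModule_lof, LinearMap.comp_apply, hp, DirectSum.lof_eq_of]
      | add x y hx hy =>
        obtain ⟨a, ha⟩ := hx
        obtain ⟨b, hb⟩ := hy
        exact ⟨a + b, by rw [map_add, ha, hb]⟩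
    haveI : ∀ i, Module.Projective R (P i) := hproj
    refine ⟨⨁ i, P i, inferInstance, inferInstance, F,
      (inferInstance : Module.Projective R (Π₀ i, P i)), hFsurj, ?_⟩
    -- identify the kernel of `F` with the direct sum of kernels
    set G : (⨁ i, ↥(LinearMap.ker (f i))) →ₗ[R] (⨁ i, P i) :=
      DirectSum.toModule R ι (⨁ i, P i)
        (fun i => DirectSum.lof R ι P i ∘ₗ (LinearMap.ker (f i)).subtype) with hG
    have hGapp : ∀ (x : ⨁ i, ↥(LinearMap.ker (f i))) (j : ι),
        (G x) j = ((x j : ↥(LinearMap.ker (f j))) : P j) :=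
      directSum_apply_toModule (fun i => (LinearMap.ker (f i)).subtype)
    have hrange : ∀ x, G x ∈ LinearMap.ker F := by
      intro x
      rw [LinearMap.mem_ker]
      refine DFinsupp.ext fun j => ?_
      rw [hFapp, hGapp, DirectSum.zero_apply]
      exact (x j).2
    set φ : (⨁ i, ↥(LinearMap.ker (f i))) →ₗ[R] ↥(LinearMap.ker F) :=
      LinearMap.codRestrict _ G hrange with hφ
    have hφbij : Function.Bijective φ := by
      constructor
      · intro x y hxy
        have hGxy : G x = G y := congrArg Subtype.val hxy
        refine DFinsupp.ext fun j => ?_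
        have := congrArg (fun z : ⨁ i, P i => z j) hGxy
        simp only [hGapp] at this
        exact Subtype.ext this
      · rintro ⟨y, hy⟩
        have hyj : ∀ j, y j ∈ LinearMap.ker (f j) := by
          intro j
          rw [LinearMap.mem_ker, ← hFapp]
          rw [LinearMap.mem_ker] at hy
          rw [hy, DirectSum.zero_apply]
        classical
        set x : ⨁ i, ↥(LinearMap.ker (f i)) :=
          DFinsupp.mk y.support (fun j => ⟨y j.1, hyj j.1⟩) with hx
        have hxval : ∀ j, ((x j : ↥(LinearMap.ker (f j))) : P j) = y j := by
          intro j
          rw [hx]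
          by_cases hj : j ∈ y.support
          · rw [DFinsupp.mk_apply, dif_pos hj]
          · rw [DFinsupp.mk_apply, dif_neg hj]
            have := DFinsupp.notMem_support_iff.1 hj
            simp [this]
        refine ⟨x, ?_⟩
        apply Subtype.ext
        show G x = y
        refine DFinsupp.ext fun j => ?_
        rw [hGapp, hxval]
    exact pdLE_congr (LinearEquiv.ofBijective φ hφbij)
      (ih _ (fun i => hker i))
end DS
theorem resBy_mono {pred pred' : ∀ (M : Type u) [AddCommGroup M] [Module R M], Prop}
    (h : ∀ (M : Type u) [AddCommGroup M] [Module R M], pred M → pred' M) :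
    ∀ (n : ℕ) (M : Type u) [AddCommGroup M] [Module R M],
      ResBy R pred n M → ResBy R pred' n M := by
  intro n
  induction n with
  | zero => intro M _ _ hM; exact h M hM
  | succ n ih =>
    rintro M _ _ ⟨P, iP, mP, f, h1, h2, h3⟩
    exact ⟨P, iP, mP, f, h P h1, h2, ih _ h3⟩

theorem exists_cover (n : ℕ) (M : Type u) [AddCommGroup M] [Module R M] :
    ∃ (T : Type u) (_ : AddCommGroup T) (_ : Module R T) (g : T →ₗ[R] M),
      pdLE R n T ∧ Function.Surjective g ∧
      ∀ (N : Type u) [AddCommGroup N] [Module R N], FPRes R n N →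
        ∀ h : N →ₗ[R] M, ∃ h' : N →ₗ[R] T, g ∘ₗ h' = h := by
  classical
  set ι := Σ (k : ℕ) (S : Submodule R (Fin k → R)),
    {h : ((Fin k → R) ⧸ S) →ₗ[R] M // FPRes R n ((Fin k → R) ⧸ S)} with hι
  set Q : ι → Type u := fun i => (Fin i.1 → R) ⧸ i.2.1 with hQdef
  refine ⟨DirectSum ι Q, inferInstance, inferInstance,
    DirectSum.toModule R ι M (fun i => i.2.2.1), ?_, ?_, ?_⟩
  · exact pdLE_directSum n Q
      (fun i => resBy_mono (fun P _ _ hp => hp.2) n _ i.2.2.2)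
  · intro m
    set e0 : ((Fin 1 → R) ⧸ (⊥ : Submodule R (Fin 1 → R))) ≃ₗ[R] (Fin 1 → R) :=
      Submodule.quotEquivOfEqBot ⊥ rfl with he0
    have hfp : FPRes R n ((Fin 1 → R) ⧸ (⊥ : Submodule R (Fin 1 → R))) :=
      fpres_congr e0.symm (fpres_of_finite_projective n _ inferInstance inferInstance)
    set h0 : ((Fin 1 → R) ⧸ (⊥ : Submodule R (Fin 1 → R))) →ₗ[R] M :=
      LinearMap.toSpanSingleton R M m ∘ₗ
        ((LinearEquiv.funUnique (Fin 1) R R).toLinearMap ∘ₗ e0.toLinearMap) with hh0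
    set i0 : ι := ⟨1, ⊥, ⟨h0, hfp⟩⟩ with hi0
    refine ⟨DirectSum.lof R ι Q i0 (e0.symm (fun _ => 1)), ?_⟩
    rw [DirectSum.toModule_lof]
    show h0 (e0.symm (fun _ => 1)) = m
    rw [hh0]
    simp [LinearMap.toSpanSingleton, LinearEquiv.funUnique]
  · intro N _ _ hN h
    haveI := fpres_finite hN
    obtain ⟨k, π, hπ⟩ := Module.Finite.exists_fin' R N
    set e : ((Fin k → R) ⧸ LinearMap.ker π) ≃ₗ[R] N :=
      LinearMap.quotKerEquivOfSurjective π hπ with he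
    have hfp := fpres_congr e.symm hN
    set i1 : ι := ⟨k, LinearMap.ker π, ⟨h ∘ₗ e.toLinearMap, hfp⟩⟩ with hi1
    refine ⟨DirectSum.lof R ι Q i1 ∘ₗ e.symm.toLinearMap, ?_⟩
    apply LinearMap.ext; intro x
    rw [LinearMap.comp_apply, LinearMap.comp_apply, DirectSum.toModule_lof]
    show (h ∘ₗ e.toLinearMap) (e.symm x) = h x
    rw [LinearMap.comp_apply]
    simp
end Aux

set_option maxHeartbeats 1000000 in
/-- If the `n`-exact and `(n+1)`-exact structures coincide, then every module in `𝒫^{<n+2}`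
has projective dimension at most `n`. -/
theorem pd_le_of_nExact_eq_succExact (n : ℕ)
    (hEq : ∀ {A B C : Type u} [AddCommGroup A] [Module R A] [AddCommGroup B] [Module R B]
      [AddCommGroup C] [Module R C] (f : A →ₗ[R] B) (g : B →ₗ[R] C),
      Function.Injective f → Function.Surjective g → Function.Exact f g →
      (NExactSES R n f g ↔ NExactSES R (n+1) f g)) :
    ∀ (M : Type u) [AddCommGroup M] [Module R M], FPRes R (n+1) M → pdLE R n M := by
  intro M _ _ hM
  obtain ⟨T, iT, mT, g, hTpd, hgs, hlift⟩ := exists_cover (R := R) n M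
  have hfi : Function.Injective ((LinearMap.ker g).subtype : ↥(LinearMap.ker g) →ₗ[R] T) :=
    Submodule.injective_subtype _
  have hex : Function.Exact ((LinearMap.ker g).subtype : ↥(LinearMap.ker g) →ₗ[R] T) g :=
    LinearMap.exact_iff.mpr (Submodule.range_subtype _).symm
  have hnex : NExactSES R n ((LinearMap.ker g).subtype : ↥(LinearMap.ker g) →ₗ[R] T) g := by
    intro N _ _ hN
    refine ⟨?_, ?_, ?_⟩
    · intro h₁ h₂ hh
      apply LinearMap.ext; intro x
      exact hfi (LinearMap.congr_fun hh x)
    · intro hB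
      constructor
      · intro hz
        have hmem : ∀ x, hB x ∈ LinearMap.ker g := fun x => by
          rw [LinearMap.mem_ker]; exact LinearMap.congr_fun hz x
        exact ⟨LinearMap.codRestrict _ hB hmem, by apply LinearMap.ext; intro x; rfl⟩
      · rintro ⟨hA, rfl⟩
        apply LinearMap.ext; intro x
        have := (hA x).2
        rw [LinearMap.mem_ker] at this
        simpa using this
    · intro h
      obtain ⟨h', hh'⟩ := hlift N hN h
      exact ⟨h', hh'⟩
  have hnex1 : NExactSES R (n+1) ((LinearMap.ker g).subtype : ↥(LinearMap.ker g) →ₗ[R] T) g :=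
    (hEq _ g hfi hgs hex).1 hnex
  obtain ⟨_, _, hsurj⟩ := hnex1 M hM
  obtain ⟨s, hs⟩ := hsurj LinearMap.id
  exact pdLE_retract n M T s g hs hTpd
end
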